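/- arXiv:1111.2820 — 16 statements merged into one kernel-verified Lean document; each statement's English description precedes it below -/
import Mathlib

section
/- Let (X, 𝓑, μ) be a nonatomic probability space and f : X → X a measurable map. If P is a strong generator of f, then P is a measure-sensitive partition for f. -/
open MeasureTheory Set Function Filter
open scoped ENNReal

variable {X : Type*}

/-- A countable partition of a measure space: a countable disjoint collection of
nonempty measurable sets whose union is the whole space. -/
def IsCountablePartition [MeasurableSpace X] (P : Set (Set X)) : Prop :=
  P.Countable ∧ (∀ ξ ∈ P, MeasurableSet ξ) ∧ (∀ ξ ∈ P, ξ.Nonempty) ∧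
    P.PairwiseDisjoint id ∧ ⋃₀ P = Set.univ

/-- The set of points `y` having the same `P`-itinerary as `x` under `f`:
for every `n`, `f^n y` lies in the element of `P` containing `f^n x`. -/
def sameItinerary (f : X → X) (P : Set (Set X)) (x : X) : Set X :=
  {y | ∀ n : ℕ, ∃ ξ ∈ P, f^[n] x ∈ ξ ∧ f^[n] y ∈ ξ}

/-- A measure-sensitive partition for `f`: a countable partition such that for every `x`
the set of points with the same itinerary as `x` is `μ`-null. -/
def IsMeasureSensitivePartition [MeasurableSpace X] (μ : Measure X) (f : X → X)
    (P : Set (Set X)) : Prop :=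
  IsCountablePartition P ∧ ∀ x : X, μ (sameItinerary f P x) = 0

/-- A map is measure-expansive if it admits a measure-sensitive partition. -/
def MeasureExpansive [MeasurableSpace X] (μ : Measure X) (f : X → X) : Prop :=
  ∃ P : Set (Set X), IsMeasureSensitivePartition μ f P

/-- An atom of a measure: a measurable set of positive measure all of whose measurable
subsets have measure `0` or full measure of the set. -/
def IsMeasureAtom [MeasurableSpace X] (μ : Measure X) (A : Set X) : Prop :=
  MeasurableSet A ∧ 0 < μ A ∧ ∀ B : Set X, B ⊆ A → MeasurableSet B → μ B = 0 ∨ μ B = μ A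

/-- A measure is nonatomic if it has no atoms. -/
def Nonatomic [MeasurableSpace X] (μ : Measure X) : Prop :=
  ∀ A : Set X, ¬ IsMeasureAtom μ A

/-- A strong generator of `f`: a countable partition `P` such that the smallest σ-algebra
containing `⋃_{k∈ℕ} f^{-k}(P)` equals the full σ-algebra mod `μ`-null sets. -/
def IsStrongGenerator [MeasurableSpace X] (μ : Measure X) (f : X → X)
    (P : Set (Set X)) : Prop :=
  IsCountablePartition P ∧
    ∀ B : Set X, MeasurableSet B →
      ∃ A : Set X,
        MeasurableSet[MeasurableSpace.generateFrom
          {S : Set X | ∃ k : ℕ, ∃ ξ ∈ P, S = f^[k] ⁻¹' ξ}] A ∧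
        μ (symmDiff A B) = 0

/-- Every strong generator of a measurable map on a nonatomic probability space
is a measure-sensitive partition. -/
theorem strongGenerator_isMeasureSensitivePartition
    [MeasurableSpace X] (μ : Measure X) [IsProbabilityMeasure μ] (hna : Nonatomic μ)
    (f : X → X) (hf : Measurable f) (P : Set (Set X)) (hP : IsStrongGenerator μ f P) :
    IsMeasureSensitivePartition μ f P := by
  obtain ⟨hCP, hgen⟩ := hP
  obtain ⟨hcount, hmeas, hne, hdisj, hcover⟩ := hCP
  refine ⟨⟨hcount, hmeas, hne, hdisj, hcover⟩, fun x => ?_⟩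
  set S := sameItinerary f P x with hSdef
  have hex : ∀ n : ℕ, ∃ ξ ∈ P, f^[n] x ∈ ξ := by
    intro n
    have h1 : f^[n] x ∈ ⋃₀ P := hcover ▸ Set.mem_univ _
    simpa [Set.mem_sUnion] using h1
  choose ξ hξP hξmem using hex
  have hSeq : S = ⋂ n, f^[n] ⁻¹' ξ n := by
    ext y
    simp only [hSdef, sameItinerary, Set.mem_setOf_eq, Set.mem_iInter, Set.mem_preimage]
    constructor
    · intro h n
      obtain ⟨ζ, hζP, hxζ, hyζ⟩ := h n
      have hζeq : ζ = ξ n := by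
        by_contra hne'
        exact Set.disjoint_left.mp (hdisj hζP (hξP n) hne') hxζ (hξmem n)
      exact hζeq ▸ hyζ
    · intro h n
      exact ⟨ξ n, hξP n, hξmem n, h n⟩
  have hSm : MeasurableSet S := by
    rw [hSeq]
    exact MeasurableSet.iInter fun n => (hf.iterate n) (hmeas _ (hξP n))
  -- atom splitting
  have hsplit : ∀ A : Set X,
      MeasurableSet[MeasurableSpace.generateFrom
        {T : Set X | ∃ k : ℕ, ∃ ζ ∈ P, T = f^[k] ⁻¹' ζ}] A →
      S ⊆ A ∨ Disjoint S A := by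
    intro A hA
    induction A, hA using MeasurableSpace.generateFrom_induction with
    | hC t ht _ =>
      obtain ⟨k, ζ, hζP, rfl⟩ := ht
      by_cases hζeq : ζ = ξ k
      · left
        subst hζeq
        intro y hy
        have := (hSeq ▸ hy : y ∈ ⋂ n, f^[n] ⁻¹' ξ n)
        exact Set.mem_iInter.mp this k
      · right
        rw [Set.disjoint_left]
        intro y hy hy'
        have hy1 : y ∈ ⋂ n, f^[n] ⁻¹' ξ n := hSeq ▸ hy
        have hy2 : f^[k] y ∈ ξ k := Set.mem_iInter.mp hy1 k
        exact Set.disjoint_left.mp (hdisj hζP (hξP k) hζeq) hy' hy2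
    | empty => exact Or.inr (by simp)
    | compl t ht ih =>
      rcases ih with h | h
      · exact Or.inr (Set.disjoint_left.mpr fun y hy hyc => hyc (h hy))
      · exact Or.inl fun y hy => Set.disjoint_left.mp h hy
    | iUnion s hs ih =>
      by_cases hc : ∃ n, S ⊆ s n
      · obtain ⟨n, hn⟩ := hc
        exact Or.inl (hn.trans (Set.subset_iUnion s n))
      · right
        push_neg at hc
        have : ∀ n, Disjoint S (s n) := fun n => (ih n).resolve_left (hc n)
        exact Set.disjoint_iUnion_right.mpr this
  -- main argument
  by_contra h0
  apply hna S
  refine ⟨hSm, pos_iff_ne_zero.mpr h0, fun B hBsub hBm => ?_⟩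
  obtain ⟨A, hAm, hAB⟩ := hgen B hBm
  rcases hsplit A hAm with hSA | hSA
  · right
    have h1 : S \ B ⊆ symmDiff A B := by
      intro y hy
      exact Or.inl ⟨hSA hy.1, hy.2⟩
    have h2 : μ (S \ B) = 0 := le_antisymm (hAB ▸ measure_mono h1) zero_le
    have h3 : μ S ≤ μ B := by
      calc μ S ≤ μ (B ∪ (S \ B)) := measure_mono (fun y hy => by
            by_cases hyB : y ∈ B
            · exact Or.inl hyB
            · exact Or.inr ⟨hy, hyB⟩)
        _ ≤ μ B + μ (S \ B) := measure_union_le _ _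
        _ = μ B := by rw [h2, add_zero]
    exact le_antisymm (measure_mono hBsub) h3
  · left
    have h1 : B ⊆ symmDiff A B := by
      intro y hy
      exact Or.inr ⟨hy, Set.disjoint_left.mp hSA (hBsub hy)⟩
    exact le_antisymm (hAB ▸ measure_mono h1) zero_le
end

section
/- Every nonatomic standard probability space carries a measure-sensitive sequence of partitions. -/
open MeasureTheory Set Function Filter
open scoped ENNReal

variable {X : Type*}

/-- A measure-sensitive sequence of partitions: an increasing (each member of `P (n+1)` is
contained mod 0 in some member of `P n`) sequence of countable partitions such that every
selection `ξ n ∈ P n` has `μ`-null intersection. -/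
def IsMeasureSensitiveSeq [MeasurableSpace X] (μ : Measure X) (P : ℕ → Set (Set X)) : Prop :=
  (∀ n, IsCountablePartition (P n)) ∧
    (∀ n, ∀ η ∈ P (n + 1), ∃ ξ ∈ P n, μ (η \ ξ) = 0) ∧
    ∀ ξ : ℕ → Set X, (∀ n, ξ n ∈ P n) → μ (⋂ n, ξ n) = 0

/-- Dyadic interval of level `n` indexed by `k : ℤ`. -/
def dyadicI (n : ℕ) (k : ℤ) : Set ℝ := Set.Ico ((k:ℝ)/2^n) (((k:ℝ)+1)/2^n)

lemma dyadic_subset (n : ℕ) (k : ℤ) : dyadicI (n+1) k ⊆ dyadicI n (k / 2) := by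
  rintro x ⟨h1, h2⟩
  have hk1 : 2 * (k / 2) ≤ k := by omega
  have hk2 : k + 1 ≤ 2 * (k / 2) + 2 := by omega
  have hk1' : 2 * (((k/2 : ℤ)):ℝ) ≤ (k:ℝ) := by exact_mod_cast hk1
  have hk2' : (k:ℝ) + 1 ≤ 2 * (((k/2 : ℤ)):ℝ) + 2 := by exact_mod_cast hk2
  have hp : (0:ℝ) < 2 ^ n := by positivity
  have hp1 : (0:ℝ) < 2 ^ (n+1) := by positivity
  constructor
  · refine le_trans ?_ h1
    rw [div_le_div_iff₀ hp hp1, pow_succ]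
    nlinarith
  · refine lt_of_lt_of_le h2 ?_
    rw [div_le_div_iff₀ hp1 hp, pow_succ]
    nlinarith

lemma dyadic_mem (n : ℕ) (x : ℝ) : x ∈ dyadicI n ⌊x * 2^n⌋ := by
  have hp : (0:ℝ) < 2 ^ n := by positivity
  constructor
  · rw [div_le_iff₀ hp]
    exact Int.floor_le _
  · rw [lt_div_iff₀ hp]
    exact Int.lt_floor_add_one _

lemma dyadic_disjoint (n : ℕ) {k k' : ℤ} (h : k ≠ k') :
    Disjoint (dyadicI n k) (dyadicI n k') := by
  rw [dyadicI, dyadicI, Set.Ico_disjoint_Ico]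
  have hp : (0:ℝ) < 2 ^ n := by positivity
  rcases lt_or_gt_of_ne h with hlt | hlt
  · refine le_trans (min_le_left _ _) (le_trans ?_ (le_max_right _ _))
    have : (k:ℝ) + 1 ≤ (k':ℝ) := by exact_mod_cast hlt
    gcongr
  · refine le_trans (min_le_right _ _) (le_trans ?_ (le_max_left _ _))
    have : (k':ℝ) + 1 ≤ (k:ℝ) := by exact_mod_cast hlt
    gcongr

lemma dyadic_small {x y : ℝ} (h : ∀ n : ℕ, ∃ k : ℤ, x ∈ dyadicI n k ∧ y ∈ dyadicI n k) :
    x = y := by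
  by_contra hne
  obtain ⟨n, hn⟩ := exists_pow_lt_of_lt_one (abs_pos.mpr (sub_ne_zero.mpr hne))
    (by norm_num : (1:ℝ)/2 < 1)
  obtain ⟨k, ⟨hx1, hx2⟩, hy1, hy2⟩ := h n
  rw [div_pow, one_pow] at hn
  have : |x - y| < 1 / 2 ^ n := by
    rw [abs_sub_lt_iff]
    have hw : ((k:ℝ)+1)/2^n = (k:ℝ)/2^n + 1/2^n := by ring
    rw [hw] at hx2 hy2
    constructor <;> linarith
  linarith

lemma singleton_null [MeasurableSpace X] [MeasurableSingletonClass X]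
    (μ : Measure X) (hna : Nonatomic μ) (a : X) : μ {a} = 0 := by
  by_contra h
  exact hna {a} ⟨measurableSet_singleton a, pos_iff_ne_zero.mpr h, fun B hB _ => by
    rcases Set.subset_singleton_iff_eq.mp hB with rfl | rfl
    · exact Or.inl measure_empty
    · exact Or.inr rfl⟩

lemma subsingleton_null [MeasurableSpace X] [MeasurableSingletonClass X]
    (μ : Measure X) (hna : Nonatomic μ) {s : Set X} (hs : s.Subsingleton) : μ s = 0 := by
  rcases hs.eq_empty_or_singleton with rfl | ⟨a, rfl⟩
  · exact measure_empty
  · exact singleton_null μ hna a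

/-- Every nonatomic standard probability space carries a measure-sensitive
sequence of partitions. -/
theorem nonatomic_standard_carries_measureSensitiveSeq
    [MeasurableSpace X] [StandardBorelSpace X]
    (μ : Measure X) [IsProbabilityMeasure μ] (hna : Nonatomic μ) :
    ∃ P : ℕ → Set (Set X), IsMeasureSensitiveSeq μ P := by
  obtain ⟨f, hf⟩ := exists_measurableEmbedding_real X
  refine ⟨fun n => {s | (∃ k : ℤ, s = f ⁻¹' dyadicI n k) ∧ s.Nonempty}, ?_, ?_, ?_⟩
  · intro n
    refine ⟨?_, ?_, ?_, ?_, ?_⟩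
    · exact Set.Countable.mono (fun s hs => hs.1.imp fun k hk => hk.symm)
        (Set.countable_range fun k : ℤ => f ⁻¹' dyadicI n k)
    · rintro s ⟨⟨k, rfl⟩, -⟩
      exact hf.measurable measurableSet_Ico
    · exact fun s hs => hs.2
    · rintro s ⟨⟨k, rfl⟩, -⟩ t ⟨⟨k', rfl⟩, -⟩ hne
      have hkk : k ≠ k' := fun h => hne (by rw [h])
      exact (dyadic_disjoint n hkk).preimage f
    · refine Set.eq_univ_of_forall fun x => ?_
      have hx := dyadic_mem n (f x)
      exact ⟨f ⁻¹' dyadicI n ⌊f x * 2^n⌋, ⟨⟨_, rfl⟩, ⟨x, hx⟩⟩, hx⟩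
  · rintro n η ⟨⟨k, rfl⟩, hne⟩
    have hsub : f ⁻¹' dyadicI (n+1) k ⊆ f ⁻¹' dyadicI n (k/2) :=
      Set.preimage_mono (dyadic_subset n k)
    refine ⟨f ⁻¹' dyadicI n (k/2), ⟨⟨k/2, rfl⟩, hne.mono hsub⟩, ?_⟩
    rw [Set.diff_eq_empty.mpr hsub, measure_empty]
  · intro ξ hξ
    choose k hk using fun n => (hξ n).1
    refine subsingleton_null μ hna fun x hx y hy => ?_
    simp only [Set.mem_iInter] at hx hy
    refine hf.injective (dyadic_small fun n => ⟨k n, ?_, ?_⟩)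
    · have := hx n; rw [hk n] at this; exact this
    · have := hy n; rw [hk n] at this; exact this
end

section
/- If a probability space (X, 𝓑, μ) carries a measure-sensitive sequence of partitions, then it is nonatomic. -/
open MeasureTheory Set Function Filter
open scoped ENNReal

variable {X : Type*}

/-- A probability space carrying a measure-sensitive sequence of partitions is
nonatomic. -/
theorem nonatomic_of_measureSensitiveSeq
    [MeasurableSpace X] (μ : Measure X) [IsProbabilityMeasure μ]
    (h : ∃ P : ℕ → Set (Set X), IsMeasureSensitiveSeq μ P) :
    Nonatomic μ := by
  obtain ⟨P, hPart, _, hNull⟩ := h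
  intro A ⟨hAm, hApos, hAtom⟩
  -- for each n choose ξ n ∈ P n with μ (A ∩ ξ n) = μ A
  have hex : ∀ n : ℕ, ∃ ξ ∈ P n, μ (A ∩ ξ) = μ A := by
    intro n
    obtain ⟨hc, hmeas, -, -, huniv⟩ := hPart n
    by_contra hno
    push_neg at hno
    have hall : ∀ ξ ∈ P n, μ (A ∩ ξ) = 0 := by
      intro ξ hξ
      rcases hAtom (A ∩ ξ) inter_subset_left (hAm.inter (hmeas ξ hξ)) with h0 | h1
      · exact h0
      · exact absurd h1 (hno ξ hξ)
    have hA : A = ⋃ ξ ∈ P n, A ∩ ξ := by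
      ext x
      simp only [mem_iUnion, mem_inter_iff, exists_prop]
      constructor
      · intro hx
        have : x ∈ ⋃₀ P n := huniv ▸ mem_univ x
        obtain ⟨ξ, hξ, hxξ⟩ := this
        exact ⟨ξ, hξ, hx, hxξ⟩
      · rintro ⟨ξ, -, hx, -⟩; exact hx
    have : μ A = 0 := by
      rw [hA]
      exact (measure_biUnion_null_iff hc).2 hall
    exact absurd this hApos.ne'
  choose ξ hmem hfull using hex
  have hdiff : ∀ n, μ (A \ ξ n) = 0 := by
    intro n
    have hm : MeasurableSet (ξ n) := ((hPart n).2.1) _ (hmem n)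
    have key : μ (A ∩ ξ n) + μ (A \ ξ n) = μ A := measure_inter_add_diff A hm
    rw [hfull n] at key
    exact (ENNReal.add_right_inj (measure_ne_top μ A)).1 (by rw [add_zero]; exact key)
  have hsub : μ A ≤ μ (⋂ n, ξ n) := by
    calc μ A = μ ((A ∩ ⋂ n, ξ n) ∪ (A \ ⋂ n, ξ n)) := by
          rw [inter_union_diff]
      _ ≤ μ (A ∩ ⋂ n, ξ n) + μ (A \ ⋂ n, ξ n) := measure_union_le _ _
      _ = μ (A ∩ ⋂ n, ξ n) := by
          have : μ (A \ ⋂ n, ξ n) = 0 := by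
            have : A \ ⋂ n, ξ n ⊆ ⋃ n, A \ ξ n := by
              intro x hx
              simp only [mem_diff, mem_iInter, not_forall] at hx
              obtain ⟨hxA, n, hn⟩ := hx
              exact mem_iUnion.2 ⟨n, hxA, hn⟩
            exact measure_mono_null this (measure_iUnion_null hdiff)
          rw [this, add_zero]
      _ ≤ μ (⋂ n, ξ n) := measure_mono inter_subset_right
  rw [hNull ξ hmem] at hsub
  exact absurd (le_antisymm hsub zero_le) hApos.ne'
end

section
/- Let f : X → X be a measurable map on a probability space (X, 𝓑, μ) and P a countable partition. The following are equivalent: (i) the sequence P_n = ⋁_{k=0}^{n} f^{-k}(P) (whose element containing x is P_n(x) = ⋂_{k=0}^{n} f^{-k}(P(f^k(x)))) is a measure-sensitive sequence of partitions; (ii) μ({y ∈ X : f^n(y) ∈ P(f^n(x)) for all n ∈ ℕ}) = 0 for every x ∈ X; (iii) μ({y ∈ X : f^n(y) ∈ P(f^n(x)) for all n ∈ ℕ}) = 0 for μ-almost every x ∈ X. -/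
open MeasureTheory Set Function Filter
open scoped ENNReal

variable {X : Type*}

/-- The join `⋁_{k=0}^{n} f^{-k}(P)`: all nonempty intersections `⋂_{k=0}^{n} f^{-k}(ξ_k)`
with `ξ_k ∈ P`. -/
def joinSeq (f : X → X) (P : Set (Set X)) (n : ℕ) : Set (Set X) :=
  {A | A.Nonempty ∧ ∃ ξ : ℕ → Set X, (∀ k, k ≤ n → ξ k ∈ P) ∧
    A = ⋂ k ∈ Finset.range (n + 1), f^[k] ⁻¹' ξ k}

private lemma part_eq [MeasurableSpace X] {P : Set (Set X)} (hP : IsCountablePartition P)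
    {ξ η : Set X} (hξ : ξ ∈ P) (hη : η ∈ P) {z : X} (hz : z ∈ ξ) (hz' : z ∈ η) : ξ = η := by
  by_contra h
  exact Set.disjoint_left.mp (hP.2.2.2.1 hξ hη h) hz hz'

private lemma part_cover [MeasurableSpace X] {P : Set (Set X)} (hP : IsCountablePartition P)
    (z : X) : ∃ ξ ∈ P, z ∈ ξ := by
  have hz : z ∈ ⋃₀ P := hP.2.2.2.2 ▸ Set.mem_univ z
  simpa [Set.mem_sUnion] using hz

private lemma sameItinerary_congr [MeasurableSpace X] {f : X → X} {P : Set (Set X)}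
    (hP : IsCountablePartition P) {x y : X} (hy : y ∈ sameItinerary f P x) :
    sameItinerary f P y = sameItinerary f P x := by
  ext z
  constructor <;> intro hz n
  · obtain ⟨ξ, hξ, hx, hyξ⟩ := hy n
    obtain ⟨ζ, hζ, hyζ, hzζ⟩ := hz n
    have h : ζ = ξ := part_eq hP hζ hξ hyζ hyξ
    exact ⟨ξ, hξ, hx, h ▸ hzζ⟩
  · obtain ⟨ξ, hξ, hx, hyξ⟩ := hy n
    obtain ⟨ζ, hζ, hxζ, hzζ⟩ := hz n
    have h : ζ = ξ := part_eq hP hζ hξ hxζ hx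
    exact ⟨ξ, hξ, hyξ, h ▸ hzζ⟩

/-- For a measurable map `f` on a probability space and a countable partition
`P`, the following are equivalent: (i) the join sequence `P_n = ⋁_{k=0}^n f^{-k}(P)` is a
measure-sensitive sequence of partitions; (ii) the set of points with the same itinerary as
`x` is null for every `x`; (iii) the same holds for `μ`-a.e. `x`. -/
theorem measureSensitive_tfae
    [MeasurableSpace X] (μ : Measure X) [IsProbabilityMeasure μ]
    (f : X → X) (hf : Measurable f) (P : Set (Set X)) (hP : IsCountablePartition P) :
    List.TFAE [IsMeasureSensitiveSeq μ (joinSeq f P),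
      ∀ x : X, μ (sameItinerary f P x) = 0,
      ∀ᵐ x ∂μ, μ (sameItinerary f P x) = 0] := by
  tfae_have 2 → 3 := fun h => Filter.Eventually.of_forall h
  tfae_have 3 → 2 := by
    intro h x
    by_contra hx
    rw [ae_iff] at h
    have hsub : sameItinerary f P x ⊆ {y | ¬ μ (sameItinerary f P y) = 0} := by
      intro y hy
      simp only [Set.mem_setOf_eq]
      rw [sameItinerary_congr hP hy]
      exact hx
    exact hx (le_antisymm (h ▸ measure_mono hsub) zero_le)
  tfae_have 1 → 2 := by
    intro h1 x
    choose ζ hζ hxζ using fun k => part_cover hP (f^[k] x)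
    set A : ℕ → Set X := fun n => ⋂ k ∈ Finset.range (n + 1), f^[k] ⁻¹' ζ k with hAdef
    have hxA : ∀ n, x ∈ A n := by
      intro n
      simp only [hAdef, Set.mem_iInter, Set.mem_preimage]
      exact fun k _ => hxζ k
    have hA : ∀ n, A n ∈ joinSeq f P n :=
      fun n => ⟨⟨x, hxA n⟩, ζ, fun k _ => hζ k, rfl⟩
    have key : sameItinerary f P x = ⋂ n, A n := by
      ext y
      simp only [Set.mem_iInter, hAdef, Set.mem_preimage]
      constructor
      · intro hy n k _
        obtain ⟨ξ, hξ, hx', hy'⟩ := hy k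
        have h : ξ = ζ k := part_eq hP hξ (hζ k) hx' (hxζ k)
        exact h ▸ hy'
      · intro hy n
        exact ⟨ζ n, hζ n, hxζ n, hy n n (Finset.self_mem_range_succ n)⟩
    rw [key]
    exact h1.2.2 A hA
  tfae_have 2 → 1 := by
    intro h2
    refine ⟨fun n => ⟨?_, ?_, ?_, ?_, ?_⟩, ?_, ?_⟩
    · -- countable
      haveI : Countable ↥P := hP.1.to_subtype
      apply Set.Countable.mono ?_ (Set.countable_range
        (fun g : Fin (n + 1) → ↥P => ⋂ i : Fin (n + 1), f^[(i : ℕ)] ⁻¹' (g i : Set X)))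
      rintro A ⟨hne, ξ, hξ, rfl⟩
      refine ⟨fun i => ⟨ξ (i : ℕ), hξ (i : ℕ) (Nat.lt_succ_iff.mp i.isLt)⟩, ?_⟩
      ext y
      simp only [Set.mem_iInter, Set.mem_preimage, Finset.mem_range, Nat.lt_succ_iff]
      constructor
      · intro h k hk; exact h ⟨k, Nat.lt_succ_of_le hk⟩
      · intro h i; exact h (i : ℕ) (Nat.lt_succ_iff.mp i.isLt)
    · -- measurable
      rintro A ⟨hne, ξ, hξ, rfl⟩
      refine MeasurableSet.biInter (Set.to_countable _) fun k hk => ?_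
      exact (hP.2.1 _ (hξ k (Nat.lt_succ_iff.mp (Finset.mem_range.mp hk)))).preimage
        (hf.iterate k)
    · -- nonempty
      exact fun A hA => hA.1
    · -- pairwise disjoint
      intro A hA B hB hne
      rw [Function.onFun, id, id, Set.disjoint_left]
      intro z hzA hzB
      apply hne
      obtain ⟨-, ξ, hξ, rfl⟩ := hA
      obtain ⟨-, η, hη, rfl⟩ := hB
      refine Set.iInter₂_congr fun k hk => ?_
      have hk' : k ≤ n := Nat.lt_succ_iff.mp (Finset.mem_range.mp hk)
      have hz1 : f^[k] z ∈ ξ k := Set.mem_iInter₂.mp hzA k hk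
      have hz2 : f^[k] z ∈ η k := Set.mem_iInter₂.mp hzB k hk
      rw [part_eq hP (hξ k hk') (hη k hk') hz1 hz2]
    · -- covers
      ext x
      simp only [Set.mem_sUnion, Set.mem_univ, iff_true]
      choose ζ hζ hxζ using fun k => part_cover hP (f^[k] x)
      refine ⟨⋂ k ∈ Finset.range (n + 1), f^[k] ⁻¹' ζ k, ⟨⟨x, ?_⟩, ζ, fun k _ => hζ k, rfl⟩, ?_⟩ <;>
        · simp only [Set.mem_iInter, Set.mem_preimage]
          exact fun k _ => hxζ k
    · -- increasing mod 0
      rintro n η ⟨hne, ξ, hξ, rfl⟩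
      set A : Set X := ⋂ k ∈ Finset.range (n + 1), f^[k] ⁻¹' ξ k with hAdef
      have hsub : (⋂ k ∈ Finset.range (n + 1 + 1), f^[k] ⁻¹' ξ k) ⊆ A := by
        intro y hy
        simp only [hAdef, Set.mem_iInter]
        intro k hk
        exact Set.mem_iInter₂.mp hy k
          (Finset.mem_range.mpr (Nat.lt_succ_of_lt (Finset.mem_range.mp hk)))
      refine ⟨A, ⟨hne.mono hsub, ξ, fun k hk => hξ k (hk.trans n.le_succ), rfl⟩, ?_⟩
      rw [Set.diff_eq_empty.mpr hsub]
      exact measure_empty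
    · -- null intersections
      intro ξ hξ
      rcases Set.eq_empty_or_nonempty (⋂ n, ξ n) with h | ⟨x, hx⟩
      · simp [h]
      · refine measure_mono_null ?_ (h2 x)
        intro y hy n
        obtain ⟨-, η, hη, hEq⟩ := hξ n
        have hxn : x ∈ ξ n := Set.mem_iInter.mp hx n
        have hyn : y ∈ ξ n := Set.mem_iInter.mp hy n
        rw [hEq] at hxn hyn
        exact ⟨η n, hη n le_rfl,
          Set.mem_iInter₂.mp hxn n (Finset.self_mem_range_succ n),
          Set.mem_iInter₂.mp hyn n (Finset.self_mem_range_succ n)⟩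
  tfae_finish
end

section
/- Let f : X → X be a totally ergodic measure-preserving map of a probability space (X, 𝓑, μ). Then every countable partition P having some element ξ with 0 < μ(ξ) < 1 is a measure-sensitive partition for f. -/
open MeasureTheory Set Function Filter
open scoped ENNReal

variable {X : Type*}

/-- `f` is ergodic (mod 0): every measurable set `A` with `A = f⁻¹ A` mod 0 satisfies
`μ A = 0` or `μ (X \\ A) = 0`. -/
def ErgodicMod0 [MeasurableSpace X] (μ : Measure X) (f : X → X) : Prop :=
  ∀ A : Set X, MeasurableSet A → μ (symmDiff A (f ⁻¹' A)) = 0 → μ A = 0 ∨ μ Aᶜ = 0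

/-- For a totally ergodic measure-preserving map of a probability space, every
countable partition having an element of measure strictly between 0 and 1 is
measure-sensitive. -/
theorem totallyErgodic_partition_isMeasureSensitive
    [MeasurableSpace X] (μ : Measure X) [IsProbabilityMeasure μ]
    (f : X → X) (hpres : MeasurePreserving f μ μ)
    (hte : ∀ n : ℕ, 0 < n → ErgodicMod0 μ f^[n])
    (P : Set (Set X)) (hP : IsCountablePartition P)
    (ξ : Set X) (hξ : ξ ∈ P) (h0 : 0 < μ ξ) (h1 : μ ξ < 1) :
    IsMeasureSensitivePartition μ f P := by
  classical
  obtain ⟨hPc, hPm, hPne, hPd, hPu⟩ := hP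
  have hmξ : MeasurableSet ξ := hPm ξ hξ
  refine ⟨⟨hPc, hPm, hPne, hPd, hPu⟩, fun x => ?_⟩
  set A : ℕ → Set X := fun n => if f^[n] x ∈ ξ then ξ else ξᶜ with hA
  have hAmeas : ∀ n, MeasurableSet (A n) := by
    intro n; simp only [hA]; split
    · exact hmξ
    · exact hmξ.compl
  have hAlt : ∀ n, μ (A n) < 1 := by
    intro n; simp only [hA]; split
    · exact h1
    · rw [measure_compl hmξ (measure_ne_top μ ξ)]
      simpa using ENNReal.sub_lt_self ENNReal.one_ne_top one_ne_zero h0.ne'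
  set D : ℕ → Set X := fun k => ⋂ n, f^[n] ⁻¹' (A (n + k)) with hD
  have hDmeas : ∀ k, MeasurableSet (D k) := fun k =>
    MeasurableSet.iInter fun n => (hAmeas (n + k)).preimage (hpres.measurable.iterate n)
  have hsub : sameItinerary f P x ⊆ D 0 := by
    intro y hy
    simp only [hD, Set.mem_iInter, Set.mem_preimage]
    intro n
    obtain ⟨ζ, hζP, hxζ, hyζ⟩ := hy n
    simp only [hA, Nat.add_zero]
    split
    · rename_i hxξ
      have hζξ : ζ = ξ := hPd.elim hζP hξ (Set.not_disjoint_iff.2 ⟨_, hxζ, hxξ⟩)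
      exact hζξ ▸ hyζ
    · rename_i hxξ
      intro hyξ
      have hζξ : ζ = ξ := hPd.elim hζP hξ (Set.not_disjoint_iff.2 ⟨_, hyζ, hyξ⟩)
      exact hxξ (hζξ ▸ hxζ)
  refine measure_mono_null hsub ?_
  by_contra hc
  have hstep : ∀ k, μ (D k) ≤ μ (D (k + 1)) := by
    intro k
    have hs : D k ⊆ f ⁻¹' D (k + 1) := by
      intro y hy
      simp only [hD, mem_iInter, mem_preimage] at hy ⊢
      intro n
      have h := hy (n + 1)
      rw [Function.iterate_succ_apply] at h
      have he : n + 1 + k = n + (k + 1) := by omega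
      rwa [he] at h
    calc μ (D k) ≤ μ (f ⁻¹' D (k + 1)) := measure_mono hs
      _ = μ (D (k + 1)) := hpres.measure_preimage (hDmeas _).nullMeasurableSet
  have hle : ∀ k, μ (D 0) ≤ μ (D k) := by
    intro k
    induction k with
    | zero => exact le_rfl
    | succ n ih => exact ih.trans (hstep n)
  set b : ℕ → Set ℕ := fun k => {n | f^[n + k] x ∈ ξ} with hb
  have hdisj : ∀ k j, b k ≠ b j → Disjoint (D k) (D j) := by
    intro k j hne
    obtain ⟨n, hn⟩ : ∃ n, ¬(f^[n + k] x ∈ ξ ↔ f^[n + j] x ∈ ξ) := by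
      by_contra h
      push_neg at h
      exact hne (Set.ext fun n => h n)
    have h1k : D k ⊆ f^[n] ⁻¹' A (n + k) := Set.iInter_subset _ n
    have h1j : D j ⊆ f^[n] ⁻¹' A (n + j) := Set.iInter_subset _ n
    have hdA : Disjoint (A (n + k)) (A (n + j)) := by
      by_cases hk : f^[n + k] x ∈ ξ
      · have hj : ¬ f^[n + j] x ∈ ξ := fun hj => hn ⟨fun _ => hj, fun _ => hk⟩
        simp only [hA, if_pos hk, if_neg hj]
        exact disjoint_compl_right
      · have hj : f^[n + j] x ∈ ξ := by
          by_contra hj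
          exact hn ⟨fun h => absurd h hk, fun h => absurd h hj⟩
        simp only [hA, if_neg hk, if_pos hj]
        exact disjoint_compl_left
    exact Disjoint.mono h1k h1j (hdA.preimage f^[n])
  obtain ⟨k, j, hkj, hbeq⟩ : ∃ k j, k ≠ j ∧ b k = b j := by
    by_contra h
    push_neg at h
    have hpd : Pairwise (Function.onFun Disjoint D) := fun k j hkj => hdisj k j (h k j hkj)
    have hU := measure_iUnion (μ := μ) hpd fun k => hDmeas k
    have h2 : (⊤ : ℝ≥0∞) ≤ μ (⋃ k, D k) := by
      rw [hU]
      calc (⊤ : ℝ≥0∞) = ∑' _ : ℕ, μ (D 0) := (ENNReal.tsum_const_eq_top_of_ne_zero hc).symm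
        _ ≤ ∑' k, μ (D k) := ENNReal.tsum_le_tsum hle
    exact measure_ne_top μ _ (top_le_iff.mp h2)
  obtain ⟨k, p, hp, hper⟩ : ∃ k p, 0 < p ∧ ∀ n, (f^[n + k] x ∈ ξ ↔ f^[n + k + p] x ∈ ξ) := by
    rcases hkj.lt_or_gt with h | h
    · refine ⟨k, j - k, by omega, fun n => ?_⟩
      have he : n + k + (j - k) = n + j := by omega
      rw [he]
      exact Set.ext_iff.mp hbeq n
    · refine ⟨j, k - j, by omega, fun n => ?_⟩
      have he : n + j + (k - j) = n + k := by omega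
      rw [he]
      exact Set.ext_iff.mp hbeq.symm n
  have hAper : ∀ n, A (n + k) = A (n + k + p) := by
    intro n
    simp only [hA]
    exact if_congr (hper n) rfl rfl
  have hginv : D k ⊆ f^[p] ⁻¹' D k := by
    intro y hy
    simp only [hD, mem_iInter, mem_preimage] at hy ⊢
    intro n
    rw [← Function.iterate_add_apply]
    have h := hy (n + p)
    have he : n + p + k = n + k + p := by omega
    rw [he, ← hAper n] at h
    exact h
  have hmp : μ (f^[p] ⁻¹' D k) = μ (D k) :=
    (hpres.iterate p).measure_preimage (hDmeas k).nullMeasurableSet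
  have hsd : μ (symmDiff (D k) (f^[p] ⁻¹' D k)) = 0 := by
    rw [symmDiff_of_le hginv,
      measure_diff hginv (hDmeas k).nullMeasurableSet (measure_ne_top μ _), hmp, tsub_self]
  rcases hte p hp (D k) (hDmeas k) hsd with h | h
  · exact hc (le_antisymm (h ▸ hle k) zero_le)
  · have hone : μ (D k) = 1 := (prob_compl_eq_zero_iff (hDmeas k)).mp h
    have hsubA : D k ⊆ A k := by
      have h0sub := Set.iInter_subset (fun n => f^[n] ⁻¹' A (n + k)) 0
      simpa [hD] using h0sub
    exact absurd (hone ▸ measure_mono hsubA) (hAlt k).not_ge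
end

section
/- Let f : X → X be an ergodic measure-preserving map of a probability space (X, 𝓑, μ) and P a finite partition with 0 < h(f,P) < ∞. Then P is a measure-sensitive partition for f. -/
open MeasureTheory Set Function Filter
open scoped ENNReal

variable {X : Type*}

/-- The entropy `H(P) = -∑_{ξ ∈ P} μ(ξ) log μ(ξ)` of a partition. -/
noncomputable def partitionEntropy [MeasurableSpace X] (μ : Measure X)
    (P : Set (Set X)) : ℝ :=
  ∑' ξ : P, Real.negMulLog (μ (ξ : Set X)).toReal

private def cylB (f : X → X) (π : X → Set X) (n : ℕ) (a : X) : Set X :=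
  ⋂ k ∈ Finset.range (n + 1), f^[k] ⁻¹' (π (f^[k] a))

private lemma measurable_cyl_measure [MeasurableSpace X] (μ : Measure X)
    {f : X → X} (hf : Measurable f) {P : Set (Set X)} (hPfin : P.Finite)
    (hPmeas : ∀ ξ ∈ P, MeasurableSet ξ)
    {π : X → Set X} (hπP : ∀ z, π z ∈ P) (hπmem : ∀ z, z ∈ π z)
    (hπuniq : ∀ ξ ∈ P, ∀ z ∈ ξ, π z = ξ) (n : ℕ) :
    Measurable fun a => μ (cylB f π n a) := by
  classical
  set κ : X → (Fin (n + 1) → Set X) := fun a k => π (f^[k.1] a) with hκ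
  have hcyl : ∀ a, cylB f π n a = κ ⁻¹' {κ a} := by
    intro a; ext y
    simp only [cylB, mem_iInter, mem_preimage, mem_singleton_iff, Finset.mem_range, hκ]
    constructor
    · intro hy
      funext k
      exact hπuniq _ (hπP (f^[k.1] a)) _ (hy k.1 k.2)
    · intro hy k hk
      have := congrFun hy (⟨k, hk⟩ : Fin (n + 1))
      simp only at this
      rw [← this]
      exact hπmem _
  have hfiber : ∀ v : Fin (n + 1) → Set X, (∀ k, v k ∈ P) →
      κ ⁻¹' {v} = ⋂ k : Fin (n + 1), f^[k.1] ⁻¹' v k := by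
    intro v hv; ext y
    simp only [mem_preimage, mem_singleton_iff, mem_iInter, hκ]
    constructor
    · intro hy k
      have := congrFun hy k
      rw [← this]
      exact hπmem _
    · intro hy
      funext k
      exact hπuniq (v k) (hv k) _ (hy k)
  have hfibermeas : ∀ v : Fin (n + 1) → Set X, (∀ k, v k ∈ P) →
      MeasurableSet (κ ⁻¹' {v}) := by
    intro v hv
    rw [hfiber v hv]
    exact MeasurableSet.iInter fun k => (hPmeas _ (hv k)).preimage (hf.iterate k.1)
  have hVset : {v : Fin (n + 1) → Set X | ∀ k, v k ∈ P}
      = Set.pi Set.univ fun _ => P := by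
    ext v; simp [Set.mem_pi]
  have hVfin : ({v : Fin (n + 1) → Set X | ∀ k, v k ∈ P}).Finite := by
    rw [hVset]; exact Set.Finite.pi fun _ => hPfin
  have key : (fun a => μ (cylB f π n a)) =
      fun a => ∑ v ∈ hVfin.toFinset,
        (κ ⁻¹' {v}).indicator (fun _ => μ (κ ⁻¹' {v})) a := by
    funext a
    have hκa : κ a ∈ hVfin.toFinset := by
      simp only [Set.Finite.mem_toFinset, mem_setOf_eq, hκ]
      intro k; exact hπP _
    rw [Finset.sum_eq_single_of_mem (κ a) hκa]
    · rw [hcyl a, Set.indicator_of_mem (by simp : a ∈ κ ⁻¹' {κ a})]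
    · intro v _ hne
      apply Set.indicator_of_notMem
      simp only [mem_preimage, mem_singleton_iff]
      exact fun hh => hne hh.symm
  rw [key]
  exact Finset.measurable_sum _ fun v hv =>
    measurable_const.indicator (hfibermeas v (by simpa using hv))

/-- A finite partition with finite positive entropy of an ergodic
measure-preserving map of a probability space is measure-sensitive. Here
`0 < h(f,P) < ∞` is expressed by the existence of a finite positive limit
`h = lim_n H(⋁_{k=0}^{n-1} f^{-k}(P))/n`. -/
theorem finite_partition_positive_entropy_isMeasureSensitive
    [MeasurableSpace X] (μ : Measure X) [IsProbabilityMeasure μ]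
    (f : X → X) (hpres : MeasurePreserving f μ μ) (herg : ErgodicMod0 μ f)
    (P : Set (Set X)) (hP : IsCountablePartition P) (hfin : P.Finite)
    (h : ℝ) (hpos : 0 < h)
    (hlim : Filter.Tendsto
      (fun n : ℕ => partitionEntropy μ (joinSeq f P n) / (n + 1)) Filter.atTop (nhds h)) :
    IsMeasureSensitivePartition μ f P := by
  classical
  obtain ⟨hPc, hPmeas, hPne, hPdisj, hPcover⟩ := id hP
  have hf : Measurable f := hpres.measurable
  refine ⟨hP, ?_⟩
  by_contra hcon
  push_neg at hcon
  obtain ⟨x, hx⟩ := hcon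
  -- choose for each point the element of the partition containing it
  have hexists : ∀ z : X, ∃ ξ, ξ ∈ P ∧ z ∈ ξ := by
    intro z
    have hz : z ∈ ⋃₀ P := by rw [hPcover]; exact mem_univ z
    simpa [mem_sUnion] using hz
  choose π hπP hπmem using hexists
  have hπuniq : ∀ ξ ∈ P, ∀ z ∈ ξ, π z = ξ := by
    intro ξ hξ z hz
    by_contra hne
    exact (Set.disjoint_left.mp (hPdisj (hπP z) hξ hne) (hπmem z)) hz
  set S : X → Set X := sameItinerary f P with hS
  have hSrep : ∀ a, S a = ⋂ k, f^[k] ⁻¹' (π (f^[k] a)) := by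
    intro a; ext y
    simp only [hS, sameItinerary, mem_setOf_eq, mem_iInter, mem_preimage]
    constructor
    · intro hy k
      obtain ⟨ξ, hξ, ha, hyk⟩ := hy k
      rwa [hπuniq ξ hξ _ ha]
    · intro hy k
      exact ⟨π (f^[k] a), hπP _, hπmem _, hy k⟩
  have hScyl : ∀ a, S a = ⋂ n, cylB f π n a := by
    intro a; rw [hSrep a]; ext y
    simp only [cylB, mem_iInter, mem_preimage, Finset.mem_range]
    exact ⟨fun hy n k _ => hy k, fun hy k => hy k k (Nat.lt_succ_self k)⟩
  have hcylmeas : ∀ n a, MeasurableSet (cylB f π n a) := by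
    intro n a
    exact MeasurableSet.biInter (Finset.range (n + 1)).countable_toSet
      fun k _ => (hPmeas _ (hπP _)).preimage (hf.iterate k)
  have hSmeas : ∀ a, MeasurableSet (S a) := by
    intro a
    rw [hScyl a]
    exact MeasurableSet.iInter fun n => hcylmeas n a
  have hcylanti : ∀ a, ∀ m n : ℕ, m ≤ n → cylB f π n a ⊆ cylB f π m a := by
    intro a m n hmn y hy
    simp only [cylB, mem_iInter, mem_preimage, Finset.mem_range] at hy ⊢
    intro k hk
    exact hy k (lt_of_lt_of_le hk (by omega))
  have hmu_eq : ∀ a, μ (S a) = ⨅ n, μ (cylB f π n a) := by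
    intro a
    rw [hScyl a]
    exact Directed.measure_iInter (fun n => (hcylmeas n a).nullMeasurableSet)
      (fun m n => ⟨max m n, hcylanti a m _ (le_max_left _ _),
        hcylanti a n _ (le_max_right _ _)⟩)
      ⟨0, measure_ne_top μ _⟩
  set g : X → ℝ≥0∞ := fun a => μ (S a) with hgdef
  have hgiInf : g = fun a => ⨅ n, μ (cylB f π n a) := funext hmu_eq
  have hgmeas : Measurable g := by
    rw [hgiInf]
    exact Measurable.iInf fun n =>
      measurable_cyl_measure μ hf hfin hPmeas hπP hπmem hπuniq n
  have hgle : ∀ a, g a ≤ 1 := fun a => prob_le_one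
  -- equivalence class property
  have hclass : ∀ a y, y ∈ S a → S y = S a := by
    intro a y hy
    rw [hSrep a] at hy
    simp only [mem_iInter, mem_preimage] at hy
    have hkey : ∀ k, π (f^[k] y) = π (f^[k] a) := fun k =>
      hπuniq _ (hπP (f^[k] a)) _ (hy k)
    rw [hSrep, hSrep]
    exact iInter_congr fun k => by rw [hkey k]
  -- subinvariance of classes
  have hsub : ∀ a, S a ⊆ f ⁻¹' (S (f a)) := by
    intro a y hy
    rw [hSrep a] at hy
    simp only [mem_iInter, mem_preimage] at hy
    rw [mem_preimage, hSrep]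
    simp only [mem_iInter, mem_preimage]
    intro k
    rw [← Function.iterate_succ_apply, ← Function.iterate_succ_apply]
    exact hy (k + 1)
  have hgf : ∀ a, g a ≤ g (f a) := by
    intro a
    calc g a = μ (S a) := rfl
      _ ≤ μ (f ⁻¹' (S (f a))) := measure_mono (hsub a)
      _ = μ (S (f a)) := hpres.measure_preimage (hSmeas _).nullMeasurableSet
      _ = g (f a) := rfl
  -- g is a.e. invariant
  have hint : ∫⁻ a, g (f a) ∂μ = ∫⁻ a, g a ∂μ := hpres.lintegral_comp hgmeas
  have hfin_int : ∫⁻ a, g a ∂μ ≠ ∞ := by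
    refine ne_of_lt (lt_of_le_of_lt (lintegral_mono fun a => hgle a) ?_)
    simp [lintegral_const]
  have hae : g =ᵐ[μ] fun a => g (f a) := by
    have hsub0 : ∫⁻ a, (g (f a) - g a) ∂μ = 0 := by
      rw [lintegral_sub hgmeas hfin_int (Filter.Eventually.of_forall hgf), hint,
        tsub_self]
    have h0 := (lintegral_eq_zero_iff ((hgmeas.comp hf).sub hgmeas)).mp hsub0
    filter_upwards [h0] with a ha
    simp only [Pi.zero_apply] at ha
    exact le_antisymm (hgf a) (tsub_eq_zero_iff_le.mp ha)
  -- constants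
  set c : ℝ≥0∞ := μ (S x) with hcdef
  have hc0 : 0 < c := pos_iff_ne_zero.mpr hx
  have hc1 : c ≤ 1 := prob_le_one
  set t : ℝ≥0∞ := c / 2 with htdef
  have ht0 : 0 < t := ENNReal.half_pos hc0.ne'
  have htc : t < c := ENNReal.half_lt_self hc0.ne' (lt_of_le_of_lt hc1 ENNReal.one_lt_top).ne
  have htne : t ≠ ∞ := (lt_of_lt_of_le htc (le_trans hc1 le_top)).ne
  have ht_half : t ≤ 1 / 2 := by
    rw [htdef]
    exact ENNReal.div_le_div_right hc1 2
  have ht1 : t < 1 :=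
    lt_of_le_of_lt ht_half (ENNReal.half_lt_self one_ne_zero ENNReal.one_ne_top)
  -- the invariant set T
  set T : Set X := {a | t < g a} with hTdef
  have hTmeas : MeasurableSet T := measurableSet_lt measurable_const hgmeas
  have hTsym : μ (symmDiff T (f ⁻¹' T)) = 0 := by
    refine measure_mono_null (fun a ha => ?_) hae
    simp only [Set.mem_symmDiff, hTdef, mem_preimage, mem_setOf_eq] at ha
    simp only [mem_setOf_eq, mem_compl_iff]
    rcases ha with ⟨h1, h2⟩ | ⟨h1, h2⟩
    · exact fun heq => h2 (heq ▸ h1)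
    · exact fun heq => h2 (heq ▸ h1)
  have hSxT : S x ⊆ T := by
    intro y hy
    have hgy : g y = c := by
      have h1 : g y = μ (S y) := rfl
      rw [h1, hclass x y hy]
    simp only [hTdef, mem_setOf_eq, hgy]
    exact htc
  have hTfull : μ Tᶜ = 0 := by
    rcases herg T hTmeas hTsym with h0 | h1
    · exact absurd (measure_mono_null hSxT h0) hx
    · exact h1
  -- join elements are cylinders
  have hjoin_elt : ∀ n, ∀ A ∈ joinSeq f P n, ∀ a ∈ A, A = cylB f π n a := by
    rintro n A ⟨hAne, ξ, hξP, rfl⟩ a ha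
    simp only [mem_iInter, mem_preimage, Finset.mem_range] at ha
    refine Set.iInter₂_congr fun k hk => ?_
    have hk' : k < n + 1 := Finset.mem_range.mp hk
    rw [hπuniq (ξ k) (hξP k (Nat.lt_succ_iff.mp hk')) _ (ha k hk')]
  have hjoin_meas : ∀ n, ∀ A ∈ joinSeq f P n, MeasurableSet A := by
    rintro n A ⟨hAne, ξ, hξP, rfl⟩
    exact MeasurableSet.biInter (Finset.range (n + 1)).countable_toSet
      fun k hk => (hPmeas _ (hξP k (Nat.lt_succ_iff.mp (Finset.mem_range.mp hk)))).preimage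
        (hf.iterate k)
  have hrange_fin : ∀ (n : ℕ) (s : ℕ → Set X),
      ⋂ k ∈ Finset.range (n + 1), s k = ⋂ k : Fin (n + 1), s k.1 := by
    intro n s
    ext y
    simp only [mem_iInter, Finset.mem_range]
    exact ⟨fun hy k => hy k.1 k.2, fun hy k hk => hy ⟨k, hk⟩⟩
  have hjoin_fin : ∀ n, (joinSeq f P n).Finite := by
    intro n
    refine Set.Finite.subset (Set.Finite.image
      (fun v : Fin (n + 1) → Set X => ⋂ k : Fin (n + 1), f^[k.1] ⁻¹' v k)
      (Set.Finite.pi fun _ : Fin (n + 1) => hfin)) ?_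
    rintro A ⟨hAne, ξ, hξP, rfl⟩
    refine ⟨fun k => ξ k.1, ?_, ?_⟩
    · exact Set.mem_univ_pi.mpr fun k => hξP k.1 (Nat.lt_succ_iff.mp k.2)
    · exact (hrange_fin n fun k => f^[k] ⁻¹' ξ k).symm
  have hjoin_disj : ∀ n, (joinSeq f P n).PairwiseDisjoint id := by
    intro n A hA B hB hne
    simp only [Function.onFun, id]
    by_contra hnd
    rw [Set.not_disjoint_iff] at hnd
    obtain ⟨y, hyA, hyB⟩ := hnd
    exact hne ((hjoin_elt n A hA y hyA).trans (hjoin_elt n B hB y hyB).symm)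
  have hjoin_big : ∀ n, ∀ A ∈ joinSeq f P n, μ A = 0 ∨ t < μ A := by
    intro n A hA
    by_cases hAT : (A ∩ T).Nonempty
    · right
      obtain ⟨a, haA, haT⟩ := hAT
      rw [hjoin_elt n A hA a haA]
      calc t < g a := haT
        _ = ⨅ m, μ (cylB f π m a) := by rw [hgiInf]
        _ ≤ μ (cylB f π n a) := iInf_le _ n
    · left
      rw [Set.not_nonempty_iff_eq_empty] at hAT
      refine measure_mono_null (fun y hy => ?_) hTfull
      simp only [mem_compl_iff]
      intro hyT
      have hmem : y ∈ A ∩ T := ⟨hy, hyT⟩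
      rw [hAT] at hmem
      exact hmem
  -- entropy bounds
  set tr : ℝ := t.toReal with htrdef
  have htr0 : 0 < tr := ENNReal.toReal_pos ht0.ne' htne
  have htr1 : tr < 1 := by
    have := (ENNReal.toReal_lt_toReal htne ENNReal.one_ne_top).mpr ht1
    simpa using this
  set M : ℝ := -Real.log tr with hMdef
  have hM0 : 0 < M := by
    rw [hMdef]
    have := Real.log_neg htr0 htr1
    linarith
  have hterm : ∀ n, ∀ A ∈ joinSeq f P n,
      0 ≤ Real.negMulLog (μ A).toReal ∧
        Real.negMulLog (μ A).toReal ≤ M * (μ A).toReal := by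
    intro n A hA
    have hu1 : (μ A).toReal ≤ 1 := by
      have := ENNReal.toReal_mono ENNReal.one_ne_top (prob_le_one (μ := μ) (s := A))
      simpa using this
    have hu0 : 0 ≤ (μ A).toReal := ENNReal.toReal_nonneg
    refine ⟨Real.negMulLog_nonneg hu0 hu1, ?_⟩
    rcases hjoin_big n A hA with h0 | hbig
    · simp [h0, Real.negMulLog_zero]
    · have hut : tr < (μ A).toReal := by
        rw [htrdef]
        exact (ENNReal.toReal_lt_toReal htne (measure_ne_top μ A)).mpr hbig
      have hlog : Real.log tr ≤ Real.log (μ A).toReal :=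
        Real.log_le_log htr0 hut.le
      calc Real.negMulLog (μ A).toReal
          = (μ A).toReal * (-Real.log (μ A).toReal) := by
            rw [Real.negMulLog]; ring
        _ ≤ (μ A).toReal * M := by
            apply mul_le_mul_of_nonneg_left _ hu0
            rw [hMdef]; linarith
        _ = M * (μ A).toReal := mul_comm _ _
  have hHnonneg : ∀ n, 0 ≤ partitionEntropy μ (joinSeq f P n) := by
    intro n
    rw [partitionEntropy]
    exact tsum_nonneg fun A => (hterm n A A.2).1
  have hHbound : ∀ n, partitionEntropy μ (joinSeq f P n) ≤ M := by
    intro n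
    haveI : Fintype (joinSeq f P n) := (hjoin_fin n).fintype
    rw [partitionEntropy, tsum_fintype]
    have hdisj : Pairwise (Disjoint on fun A : joinSeq f P n => (A : Set X)) := by
      intro A B hAB
      simpa [Function.onFun] using
        hjoin_disj n A.2 B.2 (Subtype.coe_injective.ne hAB)
    have hUnion : ∑' A : joinSeq f P n, μ (A : Set X) ≤ 1 := by
      rw [← measure_iUnion hdisj fun A : joinSeq f P n => hjoin_meas n A A.2]
      exact prob_le_one
    have hsum : ∑ A : joinSeq f P n, (μ (A : Set X)).toReal ≤ 1 := by
      calc ∑ A : joinSeq f P n, (μ (A : Set X)).toReal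
          = (∑' A : joinSeq f P n, μ (A : Set X)).toReal := by
            rw [tsum_fintype]
            exact (ENNReal.toReal_sum fun A _ => measure_ne_top μ _).symm
        _ ≤ (1 : ℝ≥0∞).toReal := ENNReal.toReal_mono ENNReal.one_ne_top hUnion
        _ = 1 := ENNReal.toReal_one
    calc ∑ A : joinSeq f P n, Real.negMulLog (μ (A : Set X)).toReal
        ≤ ∑ A : joinSeq f P n, M * (μ (A : Set X)).toReal :=
          Finset.sum_le_sum fun A _ => (hterm n A A.2).2
      _ = M * ∑ A : joinSeq f P n, (μ (A : Set X)).toReal := by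
          rw [Finset.mul_sum]
      _ ≤ M * 1 := mul_le_mul_of_nonneg_left hsum hM0.le
      _ = M := mul_one M
  -- contradiction with positive entropy
  have hzero : Tendsto
      (fun n : ℕ => partitionEntropy μ (joinSeq f P n) / (n + 1)) atTop (nhds 0) := by
    have hMlim : Tendsto (fun n : ℕ => M / ((n : ℝ) + 1)) atTop (nhds 0) :=
      tendsto_const_nhds.div_atTop
        (tendsto_atTop_add_const_right _ 1 tendsto_natCast_atTop_atTop)
    refine squeeze_zero (fun n => div_nonneg (hHnonneg n) (by positivity))
      (fun n => ?_) hMlim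
    have hnpos : (0 : ℝ) < (n : ℝ) + 1 := by positivity
    exact (div_le_div_iff_of_pos_right hnpos).mpr (hHbound n)
  exact absurd (tendsto_nhds_unique hlim hzero) hpos.ne'
end

section
/- If a probability space (X, 𝓑, μ) carries a measure-expansive measurable map, then it is nonatomic. -/
open MeasureTheory Set Function Filter
open scoped ENNReal

variable {X : Type*}

/-- A probability space carrying a measure-expansive measurable map is
nonatomic. -/
theorem nonatomic_of_measureExpansive
    [MeasurableSpace X] (μ : Measure X) [IsProbabilityMeasure μ]
    (f : X → X) (hf : Measurable f) (hexp : MeasureExpansive μ f) :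
    Nonatomic μ := by
  rintro A ⟨hAm, hApos, hAatom⟩
  obtain ⟨P, ⟨hPc, hPm, hPne, hPd, hPu⟩, hsens⟩ := hexp
  -- For each n, some ξ ∈ P captures full measure of A under f^[n]
  have key : ∀ n : ℕ, ∃ ξ ∈ P, μ (A ∩ f^[n] ⁻¹' ξ) = μ A := by
    intro n
    by_contra h
    push_neg at h
    have hzero : ∀ ξ ∈ P, μ (A ∩ f^[n] ⁻¹' ξ) = 0 := by
      intro ξ hξ
      rcases hAatom (A ∩ f^[n] ⁻¹' ξ) (inter_subset_left)
        (hAm.inter ((hf.iterate n) (hPm ξ hξ))) with h0 | hfull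
      · exact h0
      · exact absurd hfull (h ξ hξ)
    have hcover : A ⊆ ⋃ ξ ∈ P, A ∩ f^[n] ⁻¹' ξ := by
      intro x hx
      have : f^[n] x ∈ ⋃₀ P := by rw [hPu]; trivial
      rcases this with ⟨ξ, hξ, hxξ⟩
      exact mem_iUnion₂.2 ⟨ξ, hξ, hx, hxξ⟩
    have : μ A = 0 := by
      refine measure_mono_null hcover ?_
      exact (measure_biUnion_null_iff hPc).2 hzero
    exact absurd this hApos.ne'
  choose ξ hξP hξfull using key
  set S : Set X := A ∩ ⋂ n, f^[n] ⁻¹' ξ n with hS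
  have hBn : ∀ n : ℕ, μ (A \ (A ∩ f^[n] ⁻¹' ξ n)) = 0 := by
    intro n
    have hmB : MeasurableSet (A ∩ f^[n] ⁻¹' ξ n) :=
      hAm.inter ((hf.iterate n) (hPm _ (hξP n)))
    have := measure_diff (inter_subset_left : A ∩ f^[n] ⁻¹' ξ n ⊆ A)
      hmB.nullMeasurableSet (measure_ne_top μ _)
    rw [this, hξfull n, tsub_self]
  have hdiff : μ (A \ S) = 0 := by
    have hsub : A \ S ⊆ ⋃ n, A \ (A ∩ f^[n] ⁻¹' ξ n) := by
      intro x hx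
      rcases hx with ⟨hxA, hxS⟩
      have : ¬ ∀ n, x ∈ f^[n] ⁻¹' ξ n := fun h => hxS ⟨hxA, mem_iInter.2 h⟩
      push_neg at this
      rcases this with ⟨n, hn⟩
      exact mem_iUnion.2 ⟨n, hxA, fun h => hn h.2⟩
    exact measure_mono_null hsub (by simpa using measure_iUnion_null hBn)
  have hSpos : μ S ≠ 0 := by
    intro h0
    have : μ A ≤ μ S + μ (A \ S) := by
      refine le_trans (measure_mono ?_) (measure_union_le _ _)
      intro x hx
      by_cases hxS : x ∈ S
      · exact Or.inl hxS
      · exact Or.inr ⟨hx, hxS⟩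
    rw [h0, hdiff, add_zero] at this
    exact absurd (le_antisymm this zero_le) hApos.ne'
  obtain ⟨x, hxS⟩ := nonempty_of_measure_ne_zero hSpos
  have hsubIt : S ⊆ sameItinerary f P x := by
    intro y hy n
    exact ⟨ξ n, hξP n, (mem_iInter.1 hxS.2 n), (mem_iInter.1 hy.2 n)⟩
  exact hSpos (le_antisymm (le_trans (measure_mono hsubIt) (le_of_eq (hsens x))) zero_le)
end

section
/- Every ergodic measure-preserving map with positive entropy on a probability space is measure-expansive. -/
open MeasureTheory Set Function Filter
open scoped ENNReal

variable {X : Type*}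

/-- The entropy `h(f,P) = lim_{n→∞} (1/n) H(⋁_{k=0}^{n-1} f^{-k}(P))` of `f` relative to `P`
(realized as an `ℝ≥0∞`-valued limsup, which agrees with the limit whenever it exists). -/
noncomputable def mapPartitionEntropy [MeasurableSpace X] (μ : Measure X) (f : X → X)
    (P : Set (Set X)) : ℝ≥0∞ :=
  Filter.atTop.limsup fun n : ℕ =>
    ENNReal.ofReal (partitionEntropy μ (joinSeq f P n) / (n + 1))

/-- The entropy `h(f) = sup {h(f,Q) : Q a finite partition}` of `f`. -/
noncomputable def mapEntropy [MeasurableSpace X] (μ : Measure X) (f : X → X) : ℝ≥0∞ :=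
  ⨆ (P : Set (Set X)) (_ : IsCountablePartition P ∧ P.Finite), mapPartitionEntropy μ f P

open scoped Topology

set_option linter.unusedSectionVars false
section Aux


variable [MeasurableSpace X] {μ : Measure X} {f : X → X} {P : Set (Set X)}

lemma cell_unique (hdisj : P.PairwiseDisjoint id) {ξ η : Set X} {z : X}
    (hξ : ξ ∈ P) (hη : η ∈ P) (h1 : z ∈ ξ) (h2 : z ∈ η) : ξ = η :=
  hdisj.elim_set hξ hη z h1 h2

lemma self_mem_sameItinerary (hcover : ⋃₀ P = Set.univ) (y : X) :
    y ∈ sameItinerary f P y := by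
  intro n
  have hm : f^[n] y ∈ ⋃₀ P := by rw [hcover]; trivial
  obtain ⟨ξ, hξ, hmem⟩ := hm
  exact ⟨ξ, hξ, hmem, hmem⟩

lemma sameItinerary_eq_of_mem (hdisj : P.PairwiseDisjoint id) {y z : X}
    (hz : z ∈ sameItinerary f P y) : sameItinerary f P z = sameItinerary f P y := by
  ext u
  constructor
  · intro hu n
    obtain ⟨ξ, hξ, h1, h2⟩ := hu n
    obtain ⟨η, hη, k1, k2⟩ := hz n
    have he : ξ = η := cell_unique hdisj hξ hη h1 k2
    rw [he] at h2
    exact ⟨η, hη, k1, h2⟩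
  · intro hu n
    obtain ⟨ξ, hξ, h1, h2⟩ := hu n
    obtain ⟨η, hη, k1, k2⟩ := hz n
    have he : ξ = η := cell_unique hdisj hξ hη h1 k1
    rw [he] at h2
    exact ⟨η, hη, k2, h2⟩

lemma mem_sameItinerary_apply {y z : X}
    (hz : z ∈ sameItinerary f P y) : f z ∈ sameItinerary f P (f y) := by
  intro n
  obtain ⟨ξ, hξ, h1, h2⟩ := hz (n + 1)
  rw [Function.iterate_succ_apply] at h1 h2
  exact ⟨ξ, hξ, h1, h2⟩

lemma measurableSet_sameItinerary (hf : Measurable f) (hcount : P.Countable)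
    (hmeas : ∀ ξ ∈ P, MeasurableSet ξ) (y : X) :
    MeasurableSet (sameItinerary f P y) := by
  have he : sameItinerary f P y
      = ⋂ n : ℕ, ⋃ ξ ∈ P, ⋃ (_ : f^[n] y ∈ ξ), f^[n] ⁻¹' ξ := by
    ext z
    constructor
    · intro hz
      simp only [mem_iInter, mem_iUnion, mem_preimage]
      intro n
      obtain ⟨ξ, hξ, h1, h2⟩ := hz n
      exact ⟨ξ, hξ, h1, h2⟩
    · intro hz n
      simp only [mem_iInter, mem_iUnion, mem_preimage] at hz
      obtain ⟨ξ, hξ, h1, h2⟩ := hz n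
      exact ⟨ξ, hξ, h1, h2⟩
  rw [he]
  exact MeasurableSet.iInter fun n =>
    MeasurableSet.biUnion hcount fun ξ hξ =>
      MeasurableSet.iUnion fun _ => (hf.iterate n) (hmeas ξ hξ)

lemma measure_sameItinerary_le (hpres : MeasurePreserving f μ μ)
    (hcount : P.Countable) (hmeas : ∀ ξ ∈ P, MeasurableSet ξ) (y : X) :
    μ (sameItinerary f P y) ≤ μ (sameItinerary f P (f y)) := by
  have hsub : sameItinerary f P y ⊆ f ⁻¹' sameItinerary f P (f y) :=
    fun z hz => mem_sameItinerary_apply hz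
  calc μ (sameItinerary f P y) ≤ μ (f ⁻¹' sameItinerary f P (f y)) := measure_mono hsub
  _ = μ (sameItinerary f P (f y)) :=
    hpres.measure_preimage
      (measurableSet_sameItinerary hpres.measurable hcount hmeas _).nullMeasurableSet

lemma sameItinerary_subset_cell (hdisj : P.PairwiseDisjoint id) {Q : Set X} {n : ℕ} {y : X}
    (hQ : Q ∈ joinSeq f P n) (hy : y ∈ Q) : sameItinerary f P y ⊆ Q := by
  obtain ⟨-, ξ, hξ, rfl⟩ := hQ
  intro z hz
  simp only [mem_iInter, mem_preimage] at hy ⊢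
  intro k hk
  obtain ⟨η, hη, h1, h2⟩ := hz k
  have he : η = ξ k := cell_unique hdisj hη
    (hξ k (Nat.lt_succ_iff.mp (Finset.mem_range.mp hk))) h1 (hy k hk)
  rwa [he] at h2

lemma joinSeq_eq_of_inter (hdisj : P.PairwiseDisjoint id) {n : ℕ} {Q Q' : Set X}
    (hQ : Q ∈ joinSeq f P n) (hQ' : Q' ∈ joinSeq f P n)
    (hne : (Q ∩ Q').Nonempty) : Q = Q' := by
  obtain ⟨w, hw, hw'⟩ := hne
  obtain ⟨-, ξ, hξ, rfl⟩ := hQ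
  obtain ⟨-, ξ', hξ', rfl⟩ := hQ'
  simp only [mem_iInter, mem_preimage] at hw hw'
  exact Set.iInter₂_congr fun k hk => by
    rw [cell_unique hdisj (hξ k (Nat.lt_succ_iff.mp (Finset.mem_range.mp hk)))
      (hξ' k (Nat.lt_succ_iff.mp (Finset.mem_range.mp hk))) (hw k hk) (hw' k hk)]

lemma negMulLog_le_one {t : ℝ} (ht : 0 ≤ t) : Real.negMulLog t ≤ 1 := by
  rcases eq_or_lt_of_le ht with h | h
  · simp [← h]
  · have hlog : Real.log t⁻¹ ≤ t⁻¹ - 1 := Real.log_le_sub_one_of_pos (by positivity)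
    rw [Real.log_inv] at hlog
    have h2 : Real.negMulLog t = t * (-Real.log t) := by rw [Real.negMulLog]; ring
    rw [h2]
    have h1 : t * (-Real.log t) ≤ t * (t⁻¹ - 1) := mul_le_mul_of_nonneg_left hlog ht
    have h3 : t * (t⁻¹ - 1) = 1 - t := by field_simp
    nlinarith

end Aux

/-- Every ergodic measure-preserving map with positive entropy on a probability
space is measure-expansive. -/
theorem measureExpansive_of_ergodic_posEntropy
    [MeasurableSpace X] (μ : Measure X) [IsProbabilityMeasure μ]
    (f : X → X) (hpres : MeasurePreserving f μ μ) (herg : ErgodicMod0 μ f)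
    (hent : 0 < mapEntropy μ f) :
    MeasureExpansive μ f := by
  rw [mapEntropy, lt_iSup_iff] at hent
  obtain ⟨P, hent⟩ := hent
  rw [lt_iSup_iff] at hent
  obtain ⟨⟨⟨hcount, hmeas, hnon, hdisj, hcover⟩, hPfin⟩, hPpos⟩ := hent
  refine ⟨P, ⟨hcount, hmeas, hnon, hdisj, hcover⟩, ?_⟩
  intro x
  by_contra hx
  have hf : Measurable f := hpres.measurable
  set T : ℕ → Set X := fun n => sameItinerary f P (f^[n] x) with hT
  have hTmeas : ∀ n, MeasurableSet (T n) := fun n =>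
    measurableSet_sameItinerary hf hcount hmeas _
  have hchain : ∀ n, μ (sameItinerary f P x) ≤ μ (T n) := by
    intro n
    induction n with
    | zero => simp [hT]
    | succ n ih =>
      refine ih.trans ?_
      have he : T (n + 1) = sameItinerary f P (f (f^[n] x)) := by
        rw [hT]; simp only [Function.iterate_succ_apply']
      rw [he]
      exact measure_sameItinerary_le hpres hcount hmeas _
  -- pigeonhole: two equal atoms along the orbit
  have hpigeon : ∃ i j, i < j ∧ T i = T j := by
    by_contra hcon
    push_neg at hcon
    have hinj : ∀ i j, i ≠ j → T i ≠ T j := by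
      intro i j hij
      rcases hij.lt_or_gt with h | h
      · exact hcon i j h
      · exact fun he => (hcon j i h) he.symm
    have hdisjT : Pairwise (Disjoint on T) := by
      intro i j hij
      simp only [Function.onFun]
      rw [Set.disjoint_left]
      intro u hui huj
      refine hinj i j hij ?_
      have e1 : sameItinerary f P u = T i := sameItinerary_eq_of_mem hdisj hui
      have e2 : sameItinerary f P u = T j := sameItinerary_eq_of_mem hdisj huj
      rw [← e1, ← e2]
    have h1 : μ (⋃ n, T n) = ∑' n, μ (T n) := measure_iUnion hdisjT hTmeas
    have h2 : (⊤ : ℝ≥0∞) ≤ μ (⋃ n, T n) := by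
      rw [h1]
      calc (⊤ : ℝ≥0∞) = ∑' _ : ℕ, μ (sameItinerary f P x) :=
            (ENNReal.tsum_const_eq_top_of_ne_zero hx).symm
        _ ≤ ∑' n, μ (T n) := ENNReal.tsum_le_tsum hchain
    have h3 : (⊤ : ℝ≥0∞) ≤ 1 :=
      h2.trans ((measure_mono (subset_univ _)).trans_eq measure_univ)
    simp at h3
  obtain ⟨i, j, hij, heq⟩ := hpigeon
  set m : ℕ := j - i with hm
  have hm0 : 0 < m := Nat.sub_pos_of_lt hij
  have hper : T (i + m) = T i := by
    rw [hm, Nat.add_sub_cancel' hij.le]; exact heq.symm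
  have hstep : ∀ k (u : X), u ∈ T k → f u ∈ T (k + 1) := by
    intro k u hu
    have h1 := mem_sameItinerary_apply hu
    have he : T (k + 1) = sameItinerary f P (f (f^[k] x)) := by
      rw [hT]; simp only [Function.iterate_succ_apply']
    rw [he]
    exact h1
  set D : Set X := ⋃ k ∈ Finset.range m, T (i + k) with hD
  have hDmeas : MeasurableSet D :=
    (Finset.range m).measurableSet_biUnion fun k _ => hTmeas _
  have hmemD : ∀ u, u ∈ D ↔ ∃ k, k < m ∧ u ∈ T (i + k) := by
    intro u
    simp only [hD, mem_iUnion, Finset.mem_range, exists_prop]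
  have hDsub : D ⊆ f ⁻¹' D := by
    intro u hu
    obtain ⟨k, hk, hu⟩ := (hmemD u).mp hu
    have hfu := hstep _ _ hu
    show f u ∈ D
    by_cases hlt : k + 1 < m
    · exact (hmemD _).mpr ⟨k + 1, hlt, by rwa [← add_assoc]⟩
    · have hkm : k + 1 = m := Nat.le_antisymm (Nat.succ_le_of_lt hk) (not_lt.mp hlt)
      have h2 : f u ∈ T i := by
        rw [← hper]
        have : i + k + 1 = i + m := by omega
        rwa [this] at hfu
      exact (hmemD _).mpr ⟨0, hm0, by simpa using h2⟩
  have hpre : μ (f ⁻¹' D) = μ D := hpres.measure_preimage hDmeas.nullMeasurableSet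
  have hsd : μ (symmDiff D (f ⁻¹' D)) = 0 := by
    have h1 : symmDiff D (f ⁻¹' D) = (f ⁻¹' D) \ D := by
      rw [symmDiff_def]
      simp [Set.diff_eq_empty.mpr hDsub]
    rw [h1, measure_diff hDsub hDmeas.nullMeasurableSet (measure_ne_top μ D), hpre,
      tsub_self]
  have hTisubD : T i ⊆ D := fun u hu => (hmemD u).mpr ⟨0, hm0, by simpa using hu⟩
  have hDfull : μ Dᶜ = 0 := by
    rcases herg D hDmeas hsd with h0 | h1
    · exfalso
      apply hx
      have h2 : μ (T i) = 0 := le_antisymm (h0 ▸ measure_mono hTisubD) zero_le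
      exact le_antisymm (h2 ▸ hchain i) zero_le
    · exact h1
  -- entropy bound
  have hbound : ∀ n : ℕ, partitionEntropy μ (joinSeq f P n) ≤ m := by
    intro n
    set A : Set (Set X) := {Q | Q ∈ joinSeq f P n ∧ μ Q ≠ 0} with hA
    have hcov : ∀ Q ∈ A, ∃ k, k < m ∧ T (i + k) ⊆ Q := by
      rintro Q ⟨hQ, hQ0⟩
      have hQD : μ (Q ∩ D) ≠ 0 := by
        intro h0
        apply hQ0
        have hle : μ Q ≤ μ (Q ∩ D) + μ (Q ∩ Dᶜ) := by
          refine (measure_mono ?_).trans (measure_union_le _ _)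
          rw [← Set.inter_union_distrib_left, Set.union_compl_self, Set.inter_univ]
        have h2 : μ (Q ∩ Dᶜ) = 0 :=
          le_antisymm ((measure_mono Set.inter_subset_right).trans hDfull.le) zero_le
        rw [h0, h2, add_zero] at hle
        exact le_antisymm hle zero_le
      obtain ⟨u, huQ, huD⟩ := nonempty_of_measure_ne_zero hQD
      obtain ⟨k, hk, hu⟩ := (hmemD u).mp huD
      refine ⟨k, hk, ?_⟩
      have he : sameItinerary f P u = T (i + k) := sameItinerary_eq_of_mem hdisj hu
      rw [← he]
      exact sameItinerary_subset_cell hdisj hQ huQ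
    choose! K hK1 hK2 using hcov
    have hinjOn : Set.InjOn K A := by
      intro Q hQ Q' hQ' hKeq
      refine joinSeq_eq_of_inter hdisj hQ.1 hQ'.1 ⟨f^[i + K Q] x, ?_, ?_⟩
      · exact hK2 Q hQ (self_mem_sameItinerary hcover _)
      · rw [hKeq]; exact hK2 Q' hQ' (self_mem_sameItinerary hcover _)
    have hmaps : ∀ Q ∈ A, K Q ∈ ((Finset.range m : Finset ℕ) : Set ℕ) := by
      intro Q hQ
      simp only [Finset.coe_range, Set.mem_Iio]
      exact hK1 Q hQ
    have hAfin : A.Finite := by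
      refine Set.Finite.of_finite_image ?_ hinjOn
      refine Set.Finite.subset (Finset.range m).finite_toSet ?_
      rintro _ ⟨Q, hQ, rfl⟩
      exact hmaps Q hQ
    have hAcard : A.ncard ≤ m := by
      have h1 := Set.ncard_le_ncard_of_injOn K hmaps hinjOn (Finset.range m).finite_toSet
      rwa [Set.ncard_coe_finset, Finset.card_range] at h1
    set A' : Set ↥(joinSeq f P n) := {Q : ↥(joinSeq f P n) | μ (Q : Set X) ≠ 0} with hA'
    have himg : Subtype.val '' A' ⊆ A := by
      rintro _ ⟨Q, hQ, rfl⟩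
      exact ⟨Q.2, hQ⟩
    have hA'fin : A'.Finite :=
      Set.Finite.of_finite_image (hAfin.subset himg) (Subtype.val_injective.injOn)
    have hA'card : A'.ncard ≤ m := by
      have h1 : (Subtype.val '' A').ncard ≤ A.ncard := Set.ncard_le_ncard himg hAfin
      rw [Set.ncard_image_of_injective _ Subtype.val_injective] at h1
      exact h1.trans hAcard
    rw [partitionEntropy, tsum_eq_sum (s := hA'fin.toFinset)
      (fun Q hQ => by
        have h0 : μ (Q : Set X) = 0 := by
          by_contra h
          exact hQ (hA'fin.mem_toFinset.mpr h)
        simp [h0])]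
    calc ∑ Q ∈ hA'fin.toFinset, Real.negMulLog (μ (Q : Set X)).toReal
        ≤ hA'fin.toFinset.card • (1 : ℝ) :=
          Finset.sum_le_card_nsmul _ _ 1 fun Q _ => negMulLog_le_one ENNReal.toReal_nonneg
      _ = hA'fin.toFinset.card := by simp
      _ ≤ m := by
          have := Set.ncard_eq_toFinset_card _ hA'fin
          rw [← this]
          exact_mod_cast hA'card
  -- conclude: entropy relative to P is zero
  have htend : Tendsto
      (fun n : ℕ => ENNReal.ofReal (partitionEntropy μ (joinSeq f P n) / (n + 1)))
      atTop (𝓝 0) := by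
    have hub : Tendsto (fun n : ℕ => ENNReal.ofReal ((m : ℝ) / (n + 1))) atTop (𝓝 0) := by
      have h1 : Tendsto (fun n : ℕ => (m : ℝ) / (n + 1)) atTop (𝓝 0) :=
        Tendsto.div_atTop tendsto_const_nhds
          (tendsto_atTop_add_const_right _ 1 tendsto_natCast_atTop_atTop)
      have h2 := (ENNReal.continuous_ofReal.tendsto 0).comp h1
      simpa [Function.comp_def] using h2
    refine tendsto_of_tendsto_of_tendsto_of_le_of_le tendsto_const_nhds hub
      (fun n => zero_le) (fun n => ?_)
    apply ENNReal.ofReal_le_ofReal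
    have hpos : (0 : ℝ) < (n : ℝ) + 1 := by positivity
    exact div_le_div_of_nonneg_right (hbound n) hpos.le
  have hzero : mapPartitionEntropy μ f P = 0 := by
    rw [mapPartitionEntropy]
    exact htend.limsup_eq
  rw [hzero] at hPpos
  exact lt_irrefl _ hPpos
end

section
/- Every measure-expansive measurable map f : X → X of a measure space (X, 𝓑, μ) is eventually aperiodic, and in particular aperiodic. -/
open MeasureTheory Set Function Filter
open scoped ENNReal

variable {X : Type*}

/-- `f` is aperiodic: for every `n ≥ 1`, any measurable set on which `f^n x = x` is null. -/
def AperiodicMap [MeasurableSpace X] (μ : Measure X) (f : X → X) : Prop :=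
  ∀ n : ℕ, 0 < n → ∀ A : Set X, MeasurableSet A → (∀ x ∈ A, f^[n] x = x) → μ A = 0

/-- `f` is eventually aperiodic: for every `n ≥ 1` and `k ∈ ℕ`, any measurable set `A` such
that each `x ∈ A` satisfies `f^{n+i} x = f^i x` for some `0 ≤ i ≤ k` is null. -/
def EventuallyAperiodicMap [MeasurableSpace X] (μ : Measure X) (f : X → X) : Prop :=
  ∀ n k : ℕ, 0 < n → ∀ A : Set X, MeasurableSet A →
    (∀ x ∈ A, ∃ i ≤ k, f^[n + i] x = f^[i] x) → μ A = 0

/-- Every measure-expansive measurable map is eventually aperiodic, and in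
particular aperiodic. -/
theorem measureExpansive_eventuallyAperiodic
    [MeasurableSpace X] (μ : Measure X)
    (f : X → X) (hf : Measurable f) (hexp : MeasureExpansive μ f) :
    EventuallyAperiodicMap μ f ∧ AperiodicMap μ f := by
  obtain ⟨P, ⟨hPc, hPm, hPn, hPd, hPu⟩, hnull⟩ := hexp
  -- choose the cell containing each point
  have hc : ∀ x : X, ∃ ξ ∈ P, x ∈ ξ := by
    intro x
    have : x ∈ ⋃₀ P := hPu ▸ mem_univ x
    simpa using this
  choose c hcP hcx using hc
  have hcu : ∀ (x : X) (ξ : Set X), ξ ∈ P → x ∈ ξ → ξ = c x := by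
    intro x ξ hξ hx
    by_contra hne
    exact Set.disjoint_left.mp (hPd hξ (hcP x) hne) hx (hcx x)
  have hEA : EventuallyAperiodicMap μ f := by
    intro n k hn A hAmeas hper
    -- eventual periodicity of iterates for points of A
    have hper' : ∀ z ∈ A, ∀ m, k ≤ m → f^[m + n] z = f^[m] z := by
      intro z hz m hm
      obtain ⟨i, hik, hi⟩ := hper z hz
      have him : i ≤ m := hik.trans hm
      calc f^[m + n] z = f^[m - i] (f^[n + i] z) := by
            rw [← Function.iterate_add_apply]; congr 1; omega
        _ = f^[m - i] (f^[i] z) := by rw [hi]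
        _ = f^[m] z := by rw [← Function.iterate_add_apply]; congr 1; omega
    -- key combinatorial lemma: same length-(n+k) itinerary prefix gives same itinerary
    have key : ∀ x ∈ A, ∀ y ∈ A,
        (∀ m < n + k, c (f^[m] x) = c (f^[m] y)) →
        ∀ m, c (f^[m] x) = c (f^[m] y) := by
      intro x hx y hy hpre m
      induction m using Nat.strong_induction_on with
      | _ m ih =>
        rcases lt_or_ge m (n + k) with hm | hm
        · exact hpre m hm
        · have h1 : (m - n) + n = m := by omega
          have h2 : k ≤ m - n := by omega
          have h3 : m - n < m := by omega
          calc c (f^[m] x) = c (f^[(m - n) + n] x) := by rw [h1]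
            _ = c (f^[m - n] x) := by rw [hper' x hx _ h2]
            _ = c (f^[m - n] y) := ih _ h3
            _ = c (f^[(m - n) + n] y) := by rw [hper' y hy _ h2]
            _ = c (f^[m] y) := by rw [h1]
    -- itinerary prefix map
    set W : X → (Fin (n + k) → Set X) := fun x j => c (f^[(j : ℕ)] x) with hW
    have hcover : A ⊆ ⋃ w ∈ W '' A, {y ∈ A | W y = w} := by
      intro x hx
      exact mem_biUnion ⟨x, hx, rfl⟩ ⟨hx, rfl⟩
    have hnullw : ∀ w ∈ W '' A, μ {y ∈ A | W y = w} = 0 := by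
      rintro w ⟨x, hx, rfl⟩
      refine measure_mono_null ?_ (hnull x)
      rintro y ⟨hy, hWy⟩
      intro m
      have hpre : ∀ m < n + k, c (f^[m] x) = c (f^[m] y) := by
        intro m hm
        exact (congrFun hWy ⟨m, hm⟩).symm
      have := key x hx y hy hpre m
      exact ⟨c (f^[m] x), hcP _, hcx _, by rw [this]; exact hcx _⟩
    have hWcnt : (W '' A).Countable := by
      have : W '' A ⊆ {w : Fin (n + k) → Set X | ∀ j, w j ∈ P} := by
        rintro w ⟨x, _, rfl⟩ j
        exact hcP _
      exact (Set.countable_pi fun _ => hPc).mono this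
    have : μ A ≤ μ (⋃ w ∈ W '' A, {y ∈ A | W y = w}) := measure_mono hcover
    rw [(measure_biUnion_null_iff hWcnt).mpr hnullw] at this
    exact le_antisymm this zero_le
  refine ⟨hEA, ?_⟩
  intro n hn A hAmeas hper
  exact hEA n 0 hn A hAmeas fun x hx => ⟨0, le_refl 0, by simpa using hper x hx⟩
end

section
/- Let f : X → X be a measurable map on a measure space (X, 𝓑, μ) with μ(X) > 0. If f^k = f for some integer k ≥ 2, then f is not measure-expansive. -/
open MeasureTheory Set Function Filter
open scoped ENNReal

variable {X : Type*}

/-- If `μ(X) > 0` and `f^k = f` for some integer `k ≥ 2`, then `f` is not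
measure-expansive. -/
theorem not_measureExpansive_of_iterate_eq_self
    [MeasurableSpace X] (μ : Measure X) (hμ : 0 < μ Set.univ)
    (f : X → X) (hf : Measurable f) (k : ℕ) (hk : 2 ≤ k) (hfk : f^[k] = f) :
    ¬ MeasureExpansive μ f := by
  rintro ⟨P, ⟨⟨hPc, hPm, hPne, hPd, hPcov⟩, hnull⟩⟩
  have hper : ∀ n : ℕ, f^[n + 1 + (k - 1)] = f^[n + 1] := by
    intro n
    have h1 : n + 1 + (k - 1) = n + k := by omega
    rw [h1, Function.iterate_add, hfk, ← Function.iterate_succ]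
  have hred : ∀ m : ℕ, f^[m + 1] = f^[m % (k - 1) + 1] := by
    intro m
    induction m using Nat.strong_induction_on with
    | _ m ih =>
      rcases lt_or_ge m (k - 1) with h | h
      · rw [Nat.mod_eq_of_lt h]
      · have h2 : m % (k - 1) = (m - (k - 1)) % (k - 1) := by
          conv_lhs => rw [show m = (m - (k - 1)) + (k - 1) by omega]
          rw [Nat.add_mod_right]
        rw [h2, ← ih (m - (k - 1)) (by omega)]
        conv_lhs => rw [show m = (m - (k - 1)) + (k - 1) by omega]
        rw [show m - (k - 1) + (k - 1) + 1 = (m - (k - 1) + 1) + (k - 1) by omega,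
          hper]
  set I : Set (Fin k → Set X) := {g | ∀ n, g n ∈ P} with hI
  have hIc : I.Countable := Set.countable_pi (fun _ => hPc)
  set T : (Fin k → Set X) → Set X :=
    fun g => {y | ∀ n : Fin k, f^[(n : ℕ)] y ∈ g n} with hT
  have hcov : Set.univ ⊆ ⋃ g ∈ I, T g := by
    intro y _
    have hy : ∀ n : Fin k, ∃ ξ ∈ P, f^[(n : ℕ)] y ∈ ξ := by
      intro n
      have : f^[(n : ℕ)] y ∈ ⋃₀ P := by rw [hPcov]; trivial
      simpa [Set.mem_sUnion] using this
    choose g hg1 hg2 using hy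
    exact Set.mem_biUnion (fun n => hg1 n) (fun n => hg2 n)
  have hnullU : μ (⋃ g ∈ I, T g) = 0 := by
    refine (measure_biUnion_null_iff hIc).mpr ?_
    intro g hg
    rcases Set.eq_empty_or_nonempty (T g) with he | ⟨x, hx⟩
    · simp [he]
    · refine measure_mono_null ?_ (hnull x)
      intro y hy n
      cases n with
      | zero =>
        exact ⟨g ⟨0, by omega⟩, hg _, hx ⟨0, by omega⟩, hy ⟨0, by omega⟩⟩
      | succ m =>
        have hlt : m % (k - 1) + 1 < k := by
          have := Nat.mod_lt m (show 0 < k - 1 by omega)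
          omega
        refine ⟨g ⟨m % (k - 1) + 1, hlt⟩, hg _, ?_, ?_⟩
        · rw [hred m]; exact hx ⟨m % (k - 1) + 1, hlt⟩
        · rw [hred m]; exact hy ⟨m % (k - 1) + 1, hlt⟩
  have : μ Set.univ = 0 := le_antisymm (hnullU ▸ measure_mono hcov) zero_le
  exact absurd this hμ.ne'
end

section
/- Let P be a measure-sensitive partition of a negative nonsingular measurable map f : X → X on a measure space (X, 𝓑, μ). Then no element ξ ∈ P with 0 < μ(ξ) < ∞ is positively invariant (mod 0). -/
open MeasureTheory Set Function Filter
open scoped ENNReal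

variable {X : Type*}

/-- If `P` is a measure-sensitive partition of a negative nonsingular map `f`,
then no element of `P` with positive finite measure is positively invariant (mod 0). -/
theorem no_positivelyInvariant_element_of_measureSensitive
    [MeasurableSpace X] (μ : Measure X)
    (f : X → X) (hf : Measurable f)
    (hnns : ∀ A : Set X, MeasurableSet A → μ A = 0 → μ (f ⁻¹' A) = 0)
    (P : Set (Set X)) (hP : IsMeasureSensitivePartition μ f P)
    (ξ : Set X) (hξ : ξ ∈ P) (h0 : 0 < μ ξ) (h1 : μ ξ < ⊤) :
    ¬ μ (ξ \ f ⁻¹' ξ) = 0 := by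
  intro hinv
  have hmeas : MeasurableSet ξ := hP.1.2.1 ξ hξ
  -- μ (ξ \ f^[n] ⁻¹' ξ) = 0 for all n
  have key : ∀ n : ℕ, μ (ξ \ f^[n] ⁻¹' ξ) = 0 := by
    intro n
    induction n with
    | zero => simp
    | succ n ih =>
      have hsub : ξ \ f^[n+1] ⁻¹' ξ ⊆ (ξ \ f ⁻¹' ξ) ∪ f ⁻¹' (ξ \ f^[n] ⁻¹' ξ) := by
        intro y hy
        by_cases hfy : f y ∈ ξ
        · right
          refine ⟨hfy, ?_⟩
          intro hc
          exact hy.2 (by simpa [Function.iterate_succ_apply] using hc)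
        · exact Or.inl ⟨hy.1, hfy⟩
      have hpre : μ (f ⁻¹' (ξ \ f^[n] ⁻¹' ξ)) = 0 :=
        hnns _ (hmeas.diff ((hf.iterate n) hmeas)) ih
      exact measure_mono_null hsub (by
        rw [measure_union_null_iff]; exact ⟨hinv, hpre⟩)
  set A : Set X := ⋂ n : ℕ, f^[n] ⁻¹' ξ with hA
  have hdiff : μ (ξ \ A) = 0 := by
    have : ξ \ A ⊆ ⋃ n : ℕ, ξ \ f^[n] ⁻¹' ξ := by
      intro y hy
      rcases hy with ⟨hy1, hy2⟩
      simp only [hA, Set.mem_iInter, not_forall] at hy2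
      rcases hy2 with ⟨n, hn⟩
      exact Set.mem_iUnion.2 ⟨n, hy1, hn⟩
    exact measure_mono_null this (measure_iUnion_null key)
  have hApos : 0 < μ A := by
    have : μ ξ ≤ μ A := by
      calc μ ξ ≤ μ (A ∪ (ξ \ A)) := measure_mono (by intro y hy; by_cases h : y ∈ A <;> simp [h, hy])
        _ ≤ μ A + μ (ξ \ A) := measure_union_le _ _
        _ = μ A := by rw [hdiff, add_zero]
    exact lt_of_lt_of_le h0 this
  have hAne : A.Nonempty := nonempty_of_measure_ne_zero hApos.ne'
  rcases hAne with ⟨x, hx⟩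
  have hsame : A ⊆ sameItinerary f P x := by
    intro y hy n
    exact ⟨ξ, hξ, Set.mem_iInter.1 hx n, Set.mem_iInter.1 hy n⟩
  have : μ A = 0 := measure_mono_null hsame (hP.2 x)
  exact hApos.ne' this
end

section
/- Let f : X → X be a measurable map of a measure space (X, 𝓑, μ) and k ∈ ℕ⁺. Then f is measure-expansive if and only if f^k is measure-expansive. -/
open MeasureTheory Set Function Filter
open scoped ENNReal

variable {X : Type*}

/-- For any `k ≥ 1`, `f` is measure-expansive if and only if `f^k` is. -/
theorem measureExpansive_iterate_iff
    [MeasurableSpace X] (μ : Measure X)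
    (f : X → X) (hf : Measurable f) (k : ℕ) (hk : 0 < k) :
    MeasureExpansive μ f ↔ MeasureExpansive μ f^[k] := by
  constructor
  · rintro ⟨P, ⟨hcnt, hmeas, hne, hdisj, huniv⟩, hnull⟩
    have hmem : ∀ x : X, ∃ ξ ∈ P, x ∈ ξ := fun x => by
      have : x ∈ ⋃₀ P := huniv ▸ mem_univ x
      simpa [mem_sUnion] using this
    choose el helP helmem using hmem
    set Q : Set (Set X) :=
      {S | S.Nonempty ∧ ∃ g : Fin k → Set X, (∀ i, g i ∈ P) ∧
        S = ⋂ i : Fin k, f^[(i : ℕ)] ⁻¹' g i} with hQ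
    refine ⟨Q, ⟨?_, ?_, ?_, ?_, ?_⟩, ?_⟩
    · -- countable
      have : Q ⊆ (fun g : Fin k → Set X => ⋂ i : Fin k, f^[(i : ℕ)] ⁻¹' g i) ''
          (Set.pi Set.univ fun _ => P) := by
        rintro S ⟨-, g, hg, rfl⟩
        exact ⟨g, fun i _ => hg i, rfl⟩
      exact Set.Countable.mono this
        ((Set.countable_univ_pi fun _ => hcnt).image _)
    · -- measurable
      rintro S ⟨-, g, hg, rfl⟩
      exact MeasurableSet.iInter fun i => (hf.iterate _) (hmeas _ (hg i))
    · -- nonempty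
      rintro S ⟨hS, -⟩
      exact hS
    · -- pairwise disjoint
      rintro S ⟨⟨z, hz⟩, g, hg, rfl⟩ T ⟨-, g', hg', rfl⟩ hST
      simp only [Function.onFun, id_eq]
      rw [Set.disjoint_left]
      intro y hyS hyT
      apply hST
      have hgg : g = g' := by
        funext i
        by_contra hne'
        have hd := hdisj (hg i) (hg' i) hne'
        simp only [Set.mem_iInter, Set.mem_preimage] at hyS hyT
        exact Set.disjoint_left.mp hd (hyS i) (hyT i)
      rw [hgg]
    · -- union is univ
      apply Set.eq_univ_of_forall
      intro x
      refine ⟨⋂ i : Fin k, f^[(i : ℕ)] ⁻¹' el (f^[(i : ℕ)] x), ⟨⟨x, ?_⟩,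
        fun i => el (f^[(i : ℕ)] x), fun i => helP _, rfl⟩, ?_⟩ <;>
      · simp only [Set.mem_iInter, Set.mem_preimage]
        exact fun i => helmem _
    · -- null itineraries
      intro x
      refine le_antisymm (le_trans (measure_mono ?_) (hnull x).le) zero_le
      intro y hy
      intro n
      obtain ⟨S, hSQ, hxS, hyS⟩ := hy (n / k)
      obtain ⟨-, g, hg, rfl⟩ := hSQ
      have hr : n % k < k := Nat.mod_lt _ hk
      simp only [Set.mem_iInter, Set.mem_preimage] at hxS hyS
      refine ⟨g ⟨n % k, hr⟩, hg _, ?_, ?_⟩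
      · have := hxS ⟨n % k, hr⟩
        rwa [← Function.iterate_mul, ← Function.iterate_add_apply,
          Nat.mod_add_div] at this
      · have := hyS ⟨n % k, hr⟩
        rwa [← Function.iterate_mul, ← Function.iterate_add_apply,
          Nat.mod_add_div] at this
  · rintro ⟨P, hP, hnull⟩
    refine ⟨P, hP, fun x => ?_⟩
    refine le_antisymm (le_trans (measure_mono ?_) (hnull x).le) zero_le
    intro y hy n
    have := hy (k * n)
    rwa [Function.iterate_mul] at this
end

section
/- Every measure-expansive negative nonsingular measurable map of a probability space is aperiodic*. -/
open MeasureTheory Set Function Filter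
open scoped ENNReal

variable {X : Type*}

/-- Every measure-expansive negative nonsingular map of a probability space is
aperiodic*: every measurable set of positive measure has, for every `n ≥ 1`, a measurable
subset `B` with `μ(B \\ f^{-n}(B)) > 0`. -/
theorem measureExpansive_aperiodicStar
    [MeasurableSpace X] (μ : Measure X) [IsProbabilityMeasure μ]
    (f : X → X) (hf : Measurable f)
    (hnns : ∀ A : Set X, MeasurableSet A → μ A = 0 → μ (f ⁻¹' A) = 0)
    (hexp : MeasureExpansive μ f) :
    ∀ A : Set X, MeasurableSet A → 0 < μ A → ∀ n : ℕ, 0 < n →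
      ∃ B : Set X, MeasurableSet B ∧ B ⊆ A ∧ 0 < μ (B \ f^[n] ⁻¹' B) := by
  intro A hA hApos n hn
  by_contra hcon
  push_neg at hcon
  obtain ⟨P, hPpart, hPsens⟩ := hexp
  obtain ⟨hPc, hPmeas, hPne, hPdisj, hPcover⟩ := hPpart
  haveI : Countable ↥P := hPc.to_subtype
  have hinv : ∀ B : Set X, MeasurableSet B → B ⊆ A → μ (B \ f^[n] ⁻¹' B) = 0 :=
    fun B hB hBA => le_antisymm (hcon B hB hBA) zero_le
  -- key1: within A, every measurable set is invariant under f^[n] mod null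
  have key1 : ∀ C : Set X, MeasurableSet C → μ (A ∩ symmDiff C (f^[n] ⁻¹' C)) = 0 := by
    intro C hC
    have h1 : μ ((A ∩ C) \ f^[n] ⁻¹' C) = 0 := by
      refine measure_mono_null ?_ (hinv (A ∩ C) (hA.inter hC) inter_subset_left)
      intro y hy
      exact ⟨hy.1, fun h => hy.2 h.2⟩
    have h2 : μ ((A \ C) ∩ f^[n] ⁻¹' C) = 0 := by
      refine measure_mono_null ?_ (hinv (A \ C) (hA.diff hC) diff_subset)
      intro y hy
      exact ⟨hy.1, fun h => h.2 hy.2⟩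
    refine measure_mono_null ?_ (measure_union_null h1 h2)
    rintro y ⟨hyA, hy⟩
    rcases Set.mem_symmDiff.1 hy with ⟨hyC, hyD⟩ | ⟨hyD, hyC⟩
    · exact Or.inl ⟨⟨hyA, hyC⟩, hyD⟩
    · exact Or.inr ⟨⟨hyA, hyC⟩, hyD⟩
  -- key2: iterate
  have key2 : ∀ (k : ℕ) (C : Set X), MeasurableSet C →
      μ (A ∩ symmDiff C (f^[n * k] ⁻¹' C)) = 0 := by
    intro k
    induction k with
    | zero => intro C hC; simp
    | succ k ih =>
      intro C hC
      have h1 := ih C hC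
      have h2 := key1 (f^[n * k] ⁻¹' C) ((hf.iterate _) hC)
      have heq : f^[n] ⁻¹' (f^[n * k] ⁻¹' C) = f^[n * (k + 1)] ⁻¹' C := by
        rw [← Set.preimage_comp, ← Function.iterate_add, Nat.mul_succ]
      rw [heq] at h2
      refine measure_mono_null ?_ (measure_union_null h1 h2)
      rintro y ⟨hyA, hy⟩
      rcases Set.mem_symmDiff.1 hy with ⟨hy1, hy2⟩ | ⟨hy1, hy2⟩
      · by_cases hmid : y ∈ f^[n * k] ⁻¹' C
        · exact Or.inr ⟨hyA, Set.mem_symmDiff.2 (Or.inl ⟨hmid, hy2⟩)⟩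
        · exact Or.inl ⟨hyA, Set.mem_symmDiff.2 (Or.inl ⟨hy1, hmid⟩)⟩
      · by_cases hmid : y ∈ f^[n * k] ⁻¹' C
        · exact Or.inl ⟨hyA, Set.mem_symmDiff.2 (Or.inr ⟨hmid, hy2⟩)⟩
        · exact Or.inr ⟨hyA, Set.mem_symmDiff.2 (Or.inr ⟨hy1, hmid⟩)⟩
  -- find a word class of positive measure
  have hword : ∃ w : Fin n → ↥P,
      0 < μ (A ∩ ⋂ r : Fin n, f^[(r : ℕ)] ⁻¹' ((w r : Set X))) := by
    by_contra hw
    push_neg at hw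
    have hsub : A ⊆ ⋃ w : Fin n → ↥P, (A ∩ ⋂ r : Fin n, f^[(r : ℕ)] ⁻¹' ((w r : Set X))) := by
      intro x hx
      have hch : ∀ r : Fin n, ∃ ξ : ↥P, f^[(r : ℕ)] x ∈ (ξ : Set X) := by
        intro r
        have hmem : f^[(r : ℕ)] x ∈ ⋃₀ P := by rw [hPcover]; trivial
        obtain ⟨ξ, hξP, hξ⟩ := hmem
        exact ⟨⟨ξ, hξP⟩, hξ⟩
      choose w hwc using hch
      exact Set.mem_iUnion.2 ⟨w, hx, Set.mem_iInter.2 fun r => hwc r⟩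
    have hnull : μ A = 0 :=
      measure_mono_null hsub
        (measure_iUnion_null fun w => le_antisymm (hw w) zero_le)
    exact absurd hnull hApos.ne'
  obtain ⟨w, hD⟩ := hword
  set D : Set X := A ∩ ⋂ r : Fin n, f^[(r : ℕ)] ⁻¹' ((w r : Set X)) with hDdef
  -- the null exceptional set
  set N : Set X := ⋃ m : ℕ, A ∩ symmDiff
      (f^[m % n] ⁻¹' ((w ⟨m % n, Nat.mod_lt m hn⟩ : Set X)))
      (f^[m] ⁻¹' ((w ⟨m % n, Nat.mod_lt m hn⟩ : Set X))) with hNdef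
  have hN : μ N = 0 := by
    refine measure_iUnion_null fun m => ?_
    have hmeas : MeasurableSet (f^[m % n] ⁻¹' ((w ⟨m % n, Nat.mod_lt m hn⟩ : Set X))) :=
      (hf.iterate _) (hPmeas _ (w ⟨m % n, Nat.mod_lt m hn⟩).2)
    have h := key2 (m / n) _ hmeas
    have heq : f^[n * (m / n)] ⁻¹' (f^[m % n] ⁻¹' ((w ⟨m % n, Nat.mod_lt m hn⟩ : Set X)))
        = f^[m] ⁻¹' ((w ⟨m % n, Nat.mod_lt m hn⟩ : Set X)) := by
      rw [← Set.preimage_comp, ← Function.iterate_add, Nat.mod_add_div]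
    rw [heq] at h
    exact h
  have hDN : 0 < μ (D \ N) := by rw [measure_diff_null hN]; exact hD
  obtain ⟨x, hx⟩ := nonempty_of_measure_ne_zero hDN.ne'
  have hstep : ∀ (m : ℕ) (z : X), z ∈ D → z ∉ N →
      f^[m] z ∈ ((w ⟨m % n, Nat.mod_lt m hn⟩ : Set X)) := by
    intro m z hzD hzN
    have hz1 : z ∈ f^[m % n] ⁻¹' ((w ⟨m % n, Nat.mod_lt m hn⟩ : Set X)) :=
      Set.mem_iInter.1 hzD.2 ⟨m % n, Nat.mod_lt m hn⟩
    by_contra hz2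
    exact hzN (Set.mem_iUnion.2 ⟨m, hzD.1, Set.mem_symmDiff.2 (Or.inl ⟨hz1, hz2⟩)⟩)
  have hsub : D \ N ⊆ sameItinerary f P x := by
    intro y hy m
    exact ⟨(w ⟨m % n, Nat.mod_lt m hn⟩ : Set X), (w ⟨m % n, Nat.mod_lt m hn⟩).2,
      hstep m x hx.1 hx.2, hstep m y hy.1 hy.2⟩
  have hpos : 0 < μ (sameItinerary f P x) := lt_of_lt_of_le hDN (measure_mono hsub)
  exact hpos.ne' (hPsens x)
end

section
/- Let f : X → X be a measurable map of a metric probability space (X, d, μ). The following are equivalent: (1) f is pairwise sensitive; (2) there is δ > 0 such that μ(Φ_δ(x)) = 0 for every x ∈ X; (3) there is δ > 0 such that μ(Φ_δ(x)) = 0 for μ-almost every x ∈ X. -/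
open MeasureTheory Set Function Filter
open scoped ENNReal

variable {X : Type*}

/-- The dynamical `δ`-ball `Φ_δ(x) = {y : d(fⁿ x, fⁿ y) ≤ δ for all n}`. -/
def dynBall [MetricSpace X] (f : X → X) (δ : ℝ) (x : X) : Set X :=
  {y | ∀ n : ℕ, dist (f^[n] x) (f^[n] y) ≤ δ}

/-- `f` is pairwise sensitive: for some `δ > 0`, the set of pairs `(x,y)` whose orbits are
`δ`-separated at some time has full product measure. -/
def PairwiseSensitive [MetricSpace X] [MeasurableSpace X] (μ : Measure X)
    (f : X → X) : Prop :=
  ∃ δ : ℝ, 0 < δ ∧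
    (μ.prod μ) {p : X × X | ∃ n : ℕ, δ ≤ dist (f^[n] p.1) (f^[n] p.2)} = 1

/-- For a Borel measurable map of a metric probability space, the following are
equivalent: (1) `f` is pairwise sensitive; (2) there is `δ > 0` with `μ(Φ_δ(x)) = 0` for all
`x`; (3) there is `δ > 0` with `μ(Φ_δ(x)) = 0` for `μ`-a.e. `x`. -/
theorem pairwiseSensitive_tfae
    [MetricSpace X] [MeasurableSpace X] [BorelSpace X]
    (μ : Measure X) [IsProbabilityMeasure μ] (f : X → X) (hf : Measurable f) :
    List.TFAE [PairwiseSensitive μ f,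
      ∃ δ : ℝ, 0 < δ ∧ ∀ x : X, μ (dynBall f δ x) = 0,
      ∃ δ : ℝ, 0 < δ ∧ ∀ᵐ x ∂μ, μ (dynBall f δ x) = 0] := by
  have hball : ∀ (δ : ℝ) (x : X), MeasurableSet (dynBall f δ x) := by
    intro δ x
    have h : dynBall f δ x = ⋂ n, (fun y => dist (f^[n] x) (f^[n] y)) ⁻¹' Set.Iic δ := by
      ext y; simp [dynBall]
    rw [h]
    refine MeasurableSet.iInter fun n => ?_
    have hc : Measurable fun y : X => dist (f^[n] x) y :=
      (continuous_const.dist continuous_id).measurable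
    exact (hc.comp (hf.iterate n)) measurableSet_Iic
  tfae_have 1 → 2 := by
    rintro ⟨δ, hδ, hS⟩
    refine ⟨δ / 3, by linarith, fun x => ?_⟩
    set A := dynBall f (δ/3) x with hA
    have hAm : MeasurableSet (A ×ˢ A) := (hball _ x).prod (hball _ x)
    have hsub : {p : X × X | ∃ n : ℕ, δ ≤ dist (f^[n] p.1) (f^[n] p.2)} ⊆ (A ×ˢ A)ᶜ := by
      rintro ⟨y, z⟩ ⟨n, hn⟩ ⟨hy, hz⟩
      have h1 := hy n
      have h2 := hz n
      have ht : dist (f^[n] y) (f^[n] z) ≤ dist (f^[n] y) (f^[n] x) + dist (f^[n] x) (f^[n] z) :=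
        dist_triangle _ _ _
      rw [dist_comm] at h1
      linarith
    have h1 : (μ.prod μ) ((A ×ˢ A)ᶜ) = 1 :=
      le_antisymm prob_le_one (hS ▸ measure_mono hsub)
    have h0 : (μ.prod μ) (A ×ˢ A) = 0 := by
      have := measure_add_measure_compl (μ := μ.prod μ) hAm
      rw [h1, measure_univ] at this
      have h2 : (μ.prod μ) (A ×ˢ A) + 1 = 0 + 1 := by rw [this, zero_add]
      exact (ENNReal.cancel_of_ne ENNReal.one_ne_top).inj_left.mp h2
    rw [Measure.prod_prod] at h0
    exact mul_self_eq_zero.mp h0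
  tfae_have 2 → 3 := by
    rintro ⟨δ, hδ, h⟩
    exact ⟨δ, hδ, Filter.Eventually.of_forall h⟩
  tfae_have 3 → 1 := by
    rintro ⟨δ, hδ, hae⟩
    refine ⟨δ, hδ, ?_⟩
    set S := {p : X × X | ∃ n : ℕ, δ ≤ dist (f^[n] p.1) (f^[n] p.2)} with hSdef
    set W := toMeasurable (μ.prod μ) S with hW
    have hWm : MeasurableSet W := measurableSet_toMeasurable _ _
    have hWsub : Wᶜ ⊆ {p : X × X | ∀ n : ℕ, dist (f^[n] p.1) (f^[n] p.2) ≤ δ} := by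
      intro p hp n
      by_contra hlt
      exact hp (subset_toMeasurable _ _ ⟨n, (not_le.mp hlt).le⟩)
    have hWc0 : (μ.prod μ) Wᶜ = 0 := by
      rw [Measure.prod_apply hWm.compl]
      have : ∀ᵐ x ∂μ, μ (Prod.mk x ⁻¹' Wᶜ) = 0 := by
        filter_upwards [hae] with x hx
        refine measure_mono_null ?_ hx
        intro y hy
        exact fun n => hWsub hy n
      rw [lintegral_congr_ae this, lintegral_zero]
    have hmt : (μ.prod μ) W = 1 := by
      have := measure_add_measure_compl (μ := μ.prod μ) hWm
      rw [hWc0, add_zero, measure_univ] at this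
      exact this
    rw [← measure_toMeasurable S, ← hW, hmt]
  tfae_finish
end

section
/- Every pairwise sensitive Borel measurable map of a separable metric probability space is measure-expansive. -/
open MeasureTheory Set Function Filter
open scoped ENNReal

variable {X : Type*}

/-- Every pairwise sensitive Borel measurable map of a separable metric
probability space is measure-expansive. -/
theorem measureExpansive_of_pairwiseSensitive
    [MetricSpace X] [TopologicalSpace.SeparableSpace X] [MeasurableSpace X] [BorelSpace X]
    (μ : Measure X) [IsProbabilityMeasure μ] (f : X → X) (hf : Measurable f)
    (hps : PairwiseSensitive μ f) :
    MeasureExpansive μ f := by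
  classical
  obtain ⟨δ, hδ, hT1⟩ := hps
  haveI : SecondCountableTopology X := UniformSpace.secondCountable_of_separable X
  have hne : Nonempty X := by
    by_contra h
    rw [not_nonempty_iff] at h
    have : (μ : Measure X) Set.univ = 1 := measure_univ
    rw [Set.univ_eq_empty_iff.mpr h, measure_empty] at this
    exact zero_ne_one this
  obtain ⟨s, hs⟩ : ∃ s : ℕ → X, DenseRange s :=
    ⟨TopologicalSpace.denseSeq X, TopologicalSpace.denseRange_denseSeq X⟩
  set B : ℕ → Set X := fun n => Metric.ball (s n) (δ / 5) with hB
  set u : ℕ → Set X := disjointed B with hu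
  have huB : ∀ n, u n ⊆ B n := fun n => disjointed_subset B n
  have huU : ⋃ n, u n = Set.univ := by
    rw [hu, iUnion_disjointed]
    apply Set.eq_univ_of_forall
    intro x
    obtain ⟨n, hn⟩ := hs.exists_dist_lt x (by positivity : (0:ℝ) < δ / 5)
    exact Set.mem_iUnion.2 ⟨n, by simpa [hB, Metric.mem_ball, dist_comm] using hn⟩
  have humeas : ∀ n, MeasurableSet (u n) :=
    MeasurableSet.disjointed (fun n => measurableSet_ball)
  set P : Set (Set X) := u '' {n | (u n).Nonempty} with hP
  -- the key smallness property
  have hsmall : ∀ ξ ∈ P, ∀ y ∈ ξ, ∀ z ∈ ξ, dist y z < δ := by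
    rintro ξ ⟨n, -, rfl⟩ y hy z hz
    have hy' := huB n hy
    have hz' := huB n hz
    simp only [hB, Metric.mem_ball] at hy' hz'
    calc dist y z ≤ dist y (s n) + dist (s n) z := dist_triangle _ _ _
      _ < δ / 5 + δ / 5 := by rw [dist_comm (s n) z]; exact add_lt_add hy' hz'
      _ < δ := by linarith
  refine ⟨P, ⟨?_, ?_, ?_, ?_, ?_⟩, ?_⟩
  · exact (Set.countable_range u).mono (Set.image_subset_range _ _)
  · rintro ξ ⟨n, -, rfl⟩; exact humeas n
  · rintro ξ ⟨n, hn, rfl⟩; exact hn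
  · rintro a ⟨n, -, rfl⟩ b ⟨m, -, rfl⟩ hab
    have hnm : n ≠ m := by rintro rfl; exact hab rfl
    exact (disjoint_disjointed B hnm)
  · rw [Set.sUnion_image]
    apply Set.eq_univ_of_forall
    intro x
    have hx : x ∈ ⋃ n, u n := huU ▸ Set.mem_univ x
    obtain ⟨n, hn⟩ := Set.mem_iUnion.1 hx
    exact Set.mem_biUnion ⟨x, hn⟩ hn
  · -- measure-sensitivity
    intro x
    set A : Set X := sameItinerary f P x with hA
    -- the bad set T has null complement
    set T : Set (X × X) := {p : X × X | ∃ n : ℕ, δ ≤ dist (f^[n] p.1) (f^[n] p.2)} with hTdef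
    have hTmeas : MeasurableSet T := by
      have : T = ⋃ n : ℕ, {p : X × X | δ ≤ dist (f^[n] p.1) (f^[n] p.2)} := by
        ext p; simp [hTdef]
      rw [this]
      refine MeasurableSet.iUnion fun n => ?_
      exact measurableSet_le measurable_const
        (((hf.iterate n).comp measurable_fst).dist ((hf.iterate n).comp measurable_snd))
    have hTc : (μ.prod μ) Tᶜ = 0 := by
      have h1 : (μ.prod μ) Set.univ = 1 := measure_univ
      rw [measure_compl hTmeas (measure_ne_top _ _), hT1, h1, tsub_self]
    -- A × A avoids T
    have hAAT : A ×ˢ A ⊆ Tᶜ := by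
      rintro ⟨y, z⟩ ⟨hy, hz⟩
      intro hyz
      obtain ⟨n, hn⟩ := hyz
      obtain ⟨ξ, hξP, hxξ, hyξ⟩ := hy n
      obtain ⟨ζ, hζP, hxζ, hzζ⟩ := hz n
      have hξζ : ξ = ζ := by
        by_contra hne'
        obtain ⟨n₁, -, rfl⟩ := hξP
        obtain ⟨n₂, -, rfl⟩ := hζP
        have : n₁ ≠ n₂ := by rintro rfl; exact hne' rfl
        exact (disjoint_disjointed B this).le_bot ⟨hxξ, hxζ⟩
      subst hξζ
      exact absurd hn (not_le.2 (hsmall ξ hξP _ hyξ _ hzζ))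
    -- A is measurable
    have hAmeas : MeasurableSet A := by
      have : A = ⋂ n : ℕ, ⋃ ξ ∈ P, {y : X | f^[n] x ∈ ξ ∧ f^[n] y ∈ ξ} := by
        ext y
        simp only [hA, sameItinerary, Set.mem_setOf_eq, Set.mem_iInter, Set.mem_iUnion]
        constructor
        · intro h n
          obtain ⟨ξ, h1, h2, h3⟩ := h n
          exact ⟨ξ, h1, h2, h3⟩
        · intro h n
          obtain ⟨ξ, h1, h2, h3⟩ := h n
          exact ⟨ξ, h1, h2, h3⟩
      rw [this]
      refine MeasurableSet.iInter fun n => ?_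
      refine MeasurableSet.biUnion ((Set.countable_range u).mono
        (Set.image_subset_range _ _)) ?_
      rintro ξ ⟨m, -, rfl⟩
      by_cases hx : f^[n] x ∈ u m
      · have : {y : X | f^[n] x ∈ u m ∧ f^[n] y ∈ u m} = (f^[n]) ⁻¹' (u m) := by
          ext y; simp [hx]
        rw [this]
        exact (hf.iterate n) (humeas m)
      · have : {y : X | f^[n] x ∈ u m ∧ f^[n] y ∈ u m} = ∅ := by
          ext y; simp [hx]
        rw [this]; exact MeasurableSet.empty
    have hprod : (μ.prod μ) (A ×ˢ A) = μ A * μ A := Measure.prod_prod A A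
    have hle : μ A * μ A ≤ 0 := by
      rw [← hprod, ← hTc]
      exact measure_mono hAAT
    have : μ A * μ A = 0 := le_antisymm hle zero_le
    rcases mul_eq_zero.1 this with h | h
    · exact h
    · exact h
end

section
/- Every expansive Borel measurable map of a nonatomic separable metric probability space is measure-expansive. -/
open MeasureTheory Set Function Filter
open scoped ENNReal

variable {X : Type*}

/-- `f` is expansive: there is `δ > 0` such that distinct points are `δ`-separated at some
time along their orbits. -/
def ExpansiveMap [MetricSpace X] (f : X → X) : Prop :=
  ∃ δ : ℝ, 0 < δ ∧ ∀ x y : X, (∀ n : ℕ, dist (f^[n] x) (f^[n] y) ≤ δ) → x = y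

/-- Every expansive Borel measurable map of a nonatomic separable metric
probability space is measure-expansive. -/
theorem measureExpansive_of_expansive
    [MetricSpace X] [TopologicalSpace.SeparableSpace X] [MeasurableSpace X] [BorelSpace X]
    (μ : Measure X) [IsProbabilityMeasure μ] (hna : Nonatomic μ)
    (f : X → X) (hf : Measurable f) (hexp : ExpansiveMap f) :
    MeasureExpansive μ f := by
  obtain ⟨δ, hδ, hexp⟩ := hexp
  have hsingle : ∀ x : X, μ {x} = 0 := by
    intro x
    by_contra h
    refine hna {x} ⟨measurableSet_singleton x, pos_iff_ne_zero.mpr h, fun B hB hBm => ?_⟩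
    rcases Set.subset_singleton_iff_eq.mp hB with rfl | rfl
    · exact Or.inl measure_empty
    · exact Or.inr rfl
  rcases isEmpty_or_nonempty X with hX | hX
  · exact absurd (measure_univ (μ := μ)) (by simp [Set.univ_eq_empty_iff.mpr hX])
  obtain ⟨s, hsc, hsd⟩ := TopologicalSpace.exists_countable_dense X
  obtain ⟨e, rfl⟩ := Set.Countable.exists_eq_range hsc hsd.nonempty
  set B : ℕ → Set X := fun i => Metric.ball (e i) (δ/2) with hB
  have hcover : (⋃ i, B i) = Set.univ := by
    apply Set.eq_univ_of_forall
    intro x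
    obtain ⟨y, hy, hlt⟩ := Metric.mem_closure_iff.mp (hsd x) (δ/2) (by linarith)
    obtain ⟨i, rfl⟩ := hy
    exact Set.mem_iUnion.mpr ⟨i, by simpa [hB, dist_comm] using hlt⟩
  set P : Set (Set X) := (Set.range (disjointed B)) ∩ {A | A.Nonempty} with hP
  have hmem : ∀ ξ ∈ P, ∃ i, ξ = disjointed B i := by
    rintro ξ ⟨⟨i, rfl⟩, -⟩; exact ⟨i, rfl⟩
  have hsub : ∀ ξ ∈ P, ∃ i, ξ ⊆ B i := by
    intro ξ hξ
    obtain ⟨i, rfl⟩ := hmem ξ hξ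
    exact ⟨i, disjointed_subset B i⟩
  refine ⟨P, ⟨?_, ?_, ?_, ?_, ?_⟩, ?_⟩
  · exact (Set.countable_range _).mono Set.inter_subset_left
  · intro ξ hξ
    obtain ⟨i, rfl⟩ := hmem ξ hξ
    exact MeasurableSet.disjointed (fun i => Metric.isOpen_ball.measurableSet) i
  · exact fun ξ hξ => hξ.2
  · rintro ξ ⟨⟨i, rfl⟩, -⟩ η ⟨⟨j, rfl⟩, -⟩ hne
    exact (disjoint_disjointed B) (fun hij => hne (by rw [hij]))
  · apply Set.eq_univ_of_univ_subset
    rw [← hcover, ← iUnion_disjointed]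
    intro x hx
    obtain ⟨i, hi⟩ := Set.mem_iUnion.mp hx
    exact ⟨disjointed B i, ⟨⟨i, rfl⟩, ⟨x, hi⟩⟩, hi⟩
  · intro x
    have hsubx : sameItinerary f P x ⊆ {x} := by
      intro y hy
      have : x = y := by
        apply hexp
        intro n
        obtain ⟨ξ, hξP, hxξ, hyξ⟩ := hy n
        obtain ⟨i, hξi⟩ := hsub ξ hξP
        have h1 := hξi hxξ
        have h2 := hξi hyξ
        simp only [hB, Metric.mem_ball] at h1 h2
        calc dist (f^[n] x) (f^[n] y) ≤ dist (f^[n] x) (e i) + dist (e i) (f^[n] y) :=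
              dist_triangle _ _ _
          _ ≤ δ := by rw [dist_comm (e i)] ; linarith
      exact this ▸ rfl
    exact le_antisymm (le_trans (measure_mono hsubx) (le_of_eq (hsingle x))) zero_le
end
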